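/- arXiv:2504.19308 — 6 statements merged into one kernel-verified Lean document; each statement's English description precedes it below -/
import Mathlib

section
/- For every matrix A ∈ ℂ^{n×n}, with ω = exp(2πi/n), D the diagonal matrix with D(q,q) = ω^q, C the cyclic-shift permutation matrix, and R_k the circulant matrix R_k = Σ_{j=0}^{n−1} r_{j,k} C^j with coefficients r_{j,k} = (1/n) Σ_{l=0}^{n−1} ω^{−kl} A((l+j) mod n, l), one has the circulant decomposition A = Σ_{k=0}^{n−1} R_k D^k. -/
open Matrix Finset

/-- `ω = exp(2πi/n)`. -/
noncomputable def omegaC (n : ℕ) : ℂ := Complex.exp (2 * Real.pi * Complex.I / n)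

/-- The `n × n` cyclic-shift permutation matrix `C`, with `C(i,j) = 1` iff `i ≡ j + 1 (mod n)`. -/
def cycMat (n : ℕ) : Matrix (Fin n) (Fin n) ℂ :=
  Matrix.of fun i j => if (i : ℕ) = ((j : ℕ) + 1) % n then 1 else 0


lemma omegaC_ne_zero (n : ℕ) : omegaC n ≠ 0 := Complex.exp_ne_zero _

lemma omegaC_prim (n : ℕ) (hn : 0 < n) : IsPrimitiveRoot (omegaC n) n := by
  simpa [omegaC, mul_comm] using Complex.isPrimitiveRoot_exp n hn.ne'

lemma cyc_apply (n : ℕ) [NeZero n] (i j : Fin n) :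
    cycMat n i j = if i = j + 1 then 1 else 0 := by
  have h : ((j + 1 : Fin n) : ℕ) = ((j : ℕ) + 1) % n := by
    rw [Fin.val_add, Fin.val_one']
    conv_lhs => rw [Nat.add_mod, Nat.mod_mod_of_dvd _ dvd_rfl]
    rw [← Nat.add_mod]
  simp [cycMat, Fin.ext_iff, h]

open Fin.NatCast Fin.CommRing in
lemma cyc_pow (n : ℕ) [NeZero n] (j : ℕ) (i l : Fin n) :
    (cycMat n ^ j) i l = if i = l + (j : Fin n) then 1 else 0 := by
  induction j generalizing l with
  | zero => simp [Matrix.one_apply]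
  | succ j ih =>
    rw [pow_succ, Matrix.mul_apply]
    simp only [cyc_apply, mul_ite, mul_one, mul_zero]
    rw [Finset.sum_ite_eq' univ (l + 1) (fun t => (cycMat n ^ j) i t)]
    simp only [mem_univ, if_true, ih]
    have : l + 1 + ((j : ℕ) : Fin n) = l + (((j : ℕ) + 1 : ℕ) : Fin n) := by
      push_cast
      ring
    rw [this]

lemma orth (n : ℕ) (hn : 0 < n) (m l : Fin n) :
    ∑ k : Fin n, (omegaC n ^ ((m : ℤ) - (l : ℤ))) ^ (k : ℕ)
      = if m = l then (n : ℂ) else 0 := by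
  set ζ : ℂ := omegaC n ^ ((m : ℤ) - (l : ℤ)) with hζ
  rw [Fin.sum_univ_eq_sum_range (fun k => ζ ^ k) n]
  by_cases h : m = l
  · subst h
    simp [hζ]
  · rw [if_neg h]
    have hprim := omegaC_prim n hn
    have hd : ¬ ((n : ℤ) ∣ ((m : ℤ) - (l : ℤ))) := by
      have h1 := m.is_lt
      have h2 := l.is_lt
      have hne : (m : ℤ) - (l : ℤ) ≠ 0 := by
        simp only [sub_ne_zero]
        exact_mod_cast fun hc => h (Fin.ext (by exact_mod_cast hc))
      intro hdvd
      have := Int.eq_zero_of_dvd_of_natAbs_lt_natAbs hdvd (by omega)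
      omega
    have hζ1 : ζ ≠ 1 := by
      rw [hζ, Ne, hprim.zpow_eq_one_iff_dvd]
      exact hd
    have hζn : ζ ^ n = 1 := by
      rw [hζ, ← zpow_natCast, ← _root_.zpow_mul, mul_comm, _root_.zpow_mul, zpow_natCast,
        hprim.pow_eq_one, _root_.one_zpow]
    rw [geom_sum_eq hζ1, hζn, sub_self, zero_div]

/-- The diagonal phase matrix `D` with `D(q,q) = ω^q`. -/
noncomputable def phaseMat (n : ℕ) : Matrix (Fin n) (Fin n) ℂ :=
  Matrix.diagonal fun q => omegaC n ^ (q : ℕ)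

/-- The coefficients `r_{j,k} = (1/n) Σ_l ω^{-kl} A((l+j) mod n, l)`. -/
noncomputable def circCoef {n : ℕ} (A : Matrix (Fin n) (Fin n) ℂ) (j k : Fin n) : ℂ :=
  (1 / (n : ℂ)) * ∑ l : Fin n, omegaC n ^ (-((k : ℕ) * (l : ℕ) : ℤ)) * A (l + j) l

/-- The `k`-th circulant component `R_k = Σ_j r_{j,k} C^j` of `A`. -/
noncomputable def circComp {n : ℕ} (A : Matrix (Fin n) (Fin n) ℂ) (k : Fin n) :
    Matrix (Fin n) (Fin n) ℂ :=
  ∑ j : Fin n, circCoef A j k • cycMat n ^ (j : ℕ)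

/-- **Circulant decomposition**: every `A ∈ ℂ^{n×n}` satisfies `A = Σ_{k=0}^{n-1} R_k D^k`. -/
theorem circulant_decomposition (n : ℕ) (hn : 0 < n) (A : Matrix (Fin n) (Fin n) ℂ) :
    A = ∑ k : Fin n, circComp A k * phaseMat n ^ (k : ℕ) := by
  haveI : NeZero n := ⟨hn.ne'⟩
  have h0 : (n : ℂ) ≠ 0 := Nat.cast_ne_zero.mpr hn.ne'
  have hω := omegaC_ne_zero n
  ext i m
  have hcond : ∀ b : Fin n, (i = m + b) ↔ (b = i - m) := by
    intro b
    constructor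
    · intro h; rw [h, add_sub_cancel_left]
    · intro h; rw [h, add_comm, sub_add_cancel]
  have step1 : ∀ k : Fin n,
      (circComp A k * phaseMat n ^ (k : ℕ)) i m
        = circCoef A (i - m) k * (omegaC n ^ (m : ℕ)) ^ (k : ℕ) := by
    intro k
    rw [phaseMat, Matrix.diagonal_pow, Matrix.mul_diagonal]
    congr 1
    rw [circComp, Matrix.sum_apply]
    simp only [Matrix.smul_apply, cyc_pow, Fin.cast_val_eq_self, smul_eq_mul,
      mul_ite, mul_one, mul_zero, hcond]
    rw [Finset.sum_ite_eq' univ (i - m) (fun j => circCoef A j k)]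
    simp
  have hexp : ∀ k l : Fin n,
      (omegaC n ^ (-(((k : ℕ) : ℤ) * ((l : ℕ) : ℤ)))) * (omegaC n ^ (m : ℕ)) ^ (k : ℕ)
        = (omegaC n ^ ((m : ℤ) - (l : ℤ))) ^ (k : ℕ) := by
    intro k l
    rw [← pow_mul, ← zpow_natCast (omegaC n) ((m : ℕ) * (k : ℕ)), ← zpow_add₀ hω,
      ← zpow_natCast (omegaC n ^ ((m : ℤ) - (l : ℤ))) (k : ℕ), ← _root_.zpow_mul]
    congr 1
    push_cast
    ring
  rw [Matrix.sum_apply]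
  symm
  calc ∑ k : Fin n, (circComp A k * phaseMat n ^ (k : ℕ)) i m
      = ∑ k : Fin n, ∑ l : Fin n,
          (1 / (n : ℂ)) * ((omegaC n ^ ((m : ℤ) - (l : ℤ))) ^ (k : ℕ) * A (l + (i - m)) l) := by
        refine Finset.sum_congr rfl fun k _ => ?_
        rw [step1 k, circCoef, mul_assoc, Finset.sum_mul, Finset.mul_sum]
        refine Finset.sum_congr rfl fun l _ => ?_
        rw [← hexp k l]
        ring
    _ = ∑ l : Fin n,
          (1 / (n : ℂ)) * ((∑ k : Fin n, (omegaC n ^ ((m : ℤ) - (l : ℤ))) ^ (k : ℕ))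
            * A (l + (i - m)) l) := by
        rw [Finset.sum_comm]
        refine Finset.sum_congr rfl fun l _ => ?_
        conv_rhs => rw [Finset.sum_mul, Finset.mul_sum]
    _ = A i m := by
        simp only [orth n hn, ite_mul, zero_mul, mul_ite, mul_zero]
        rw [Finset.sum_ite_eq univ m]
        simp only [mem_univ, if_true, add_comm m (i - m), sub_add_cancel]
        field_simp
end

section
/- Let A ∈ ℂ^{n×n} have circulant decomposition A = Σ_{k=0}^{n−1} R_k D^k. Then for every k, R_k is the minimizer of ‖A D^{−k} − M‖_F over all circulant matrices M ∈ ℂ^{n×n}. -/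
open Matrix Finset
open Fin.NatCast Fin.CommRing

/-- The diagonal matrix `D^{-1}` with entries `ω^{-q}`, so that `(D^{-1})^k = D^{-k}`. -/
noncomputable def phaseMatInv (n : ℕ) : Matrix (Fin n) (Fin n) ℂ :=
  Matrix.diagonal fun q => omegaC n ^ (-(q : ℤ))

/-- A matrix is circulant if it is a linear combination `Σ_j r_j C^j` of the powers of the
cyclic-shift matrix `C`. -/
def IsCirculant {n : ℕ} (M : Matrix (Fin n) (Fin n) ℂ) : Prop :=
  ∃ r : Fin n → ℂ, M = ∑ j : Fin n, r j • cycMat n ^ (j : ℕ)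

/-- The Frobenius norm of a complex matrix. -/
noncomputable def frobNorm {n : ℕ} (M : Matrix (Fin n) (Fin n) ℂ) : ℝ :=
  Real.sqrt (∑ i : Fin n, ∑ j : Fin n, ‖M i j‖ ^ 2)

lemma cycMat_apply {n : ℕ} [NeZero n] (i j : Fin n) :
    cycMat n i j = if i = j + 1 then 1 else 0 := by
  unfold cycMat
  simp only [Matrix.of_apply]
  congr 1
  rw [eq_iff_iff, Fin.ext_iff, Fin.val_add, Fin.val_one', Nat.add_mod ((j:ℕ)) 1 n,
    Nat.mod_eq_of_lt j.isLt]

lemma cycMat_pow {n : ℕ} [NeZero n] (m : ℕ) (i l : Fin n) :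
    (cycMat n ^ m) i l = if i = l + (m : Fin n) then 1 else 0 := by
  induction m generalizing i l with
  | zero => simp [Matrix.one_apply]
  | succ m ih =>
    rw [pow_succ, Matrix.mul_apply]
    simp only [ih, cycMat_apply, mul_ite, mul_one, mul_zero, ite_mul, one_mul, zero_mul]
    rw [Finset.sum_ite_eq' univ (l + 1)]
    simp only [mem_univ, if_true]
    congr 1
    simp only [eq_iff_iff]
    push_cast
    constructor <;> intro h <;> rw [h] <;> ring

lemma circ_entry {n : ℕ} [NeZero n] (r : Fin n → ℂ) (i l : Fin n) :
    (∑ j : Fin n, r j • cycMat n ^ (j : ℕ)) i l = r (i - l) := by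
  rw [Matrix.sum_apply]
  have : ∀ j : Fin n, (r j • cycMat n ^ (j : ℕ)) i l = if j = i - l then r j else 0 := by
    intro j
    rw [Matrix.smul_apply, cycMat_pow, Fin.cast_val_eq_self, smul_eq_mul]
    by_cases h : j = i - l
    · subst h; simp
    · rw [if_neg h, if_neg, mul_zero]
      intro hc; exact h (by rw [hc]; ring)
  simp only [this, Finset.sum_ite_eq' univ (i - l), mem_univ, if_true]

lemma mean_min {n : ℕ} (hn : 0 < n) (x : Fin n → ℂ) (r : ℂ) :
    ∑ l : Fin n, ‖x l - (1 / (n:ℂ)) * ∑ l, x l‖^2 ≤ ∑ l : Fin n, ‖x l - r‖^2 := by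
  set c : ℂ := (1 / (n:ℂ)) * ∑ l, x l with hc
  have hn' : (n:ℂ) ≠ 0 := Nat.cast_ne_zero.mpr hn.ne'
  have hsum : ∑ l : Fin n, (x l - c) = 0 := by
    rw [Finset.sum_sub_distrib, Finset.sum_const, Finset.card_univ, Fintype.card_fin, hc]
    field_simp
    rw [nsmul_eq_mul]
    field_simp
    ring
  have key : ∀ l : Fin n, ‖x l - r‖^2 =
      ‖x l - c‖^2 + ‖c - r‖^2 + 2 * ((x l - c) * (starRingEnd ℂ) (c - r)).re := by
    intro l
    have : x l - r = (x l - c) + (c - r) := by ring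
    rw [this]
    simp only [Complex.sq_norm]
    rw [Complex.normSq_add]
  calc ∑ l : Fin n, ‖x l - c‖^2
      ≤ ∑ l : Fin n, ‖x l - c‖^2 + (n * ‖c - r‖^2 +
          2 * ((∑ l : Fin n, (x l - c)) * (starRingEnd ℂ) (c - r)).re) := by
        rw [hsum]; simp; positivity
    _ = ∑ l : Fin n, ‖x l - r‖^2 := by
        simp only [key]
        rw [Finset.sum_add_distrib, Finset.sum_add_distrib, Finset.sum_mul, Complex.re_sum,
          Finset.mul_sum]
        simp [Finset.sum_const, card_univ, add_assoc]

/-- For each `k`, the circulant component `R_k` minimizes `‖A D^{-k} - M‖_F` over all circulant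
matrices `M ∈ ℂ^{n×n}`. -/
theorem circComp_is_minimizer (n : ℕ) (hn : 0 < n) (A : Matrix (Fin n) (Fin n) ℂ) (k : Fin n) :
    ∀ M : Matrix (Fin n) (Fin n) ℂ, IsCirculant M →
      frobNorm (A * phaseMatInv n ^ (k : ℕ) - circComp A k) ≤
        frobNorm (A * phaseMatInv n ^ (k : ℕ) - M) := by
  haveI : NeZero n := ⟨hn.ne'⟩
  rintro M ⟨r, rfl⟩
  set B := A * phaseMatInv n ^ (k : ℕ) with hBdef
  have hB : ∀ i l : Fin n, B i l = A i l * (omegaC n ^ (-(l:ℤ)))^(k:ℕ) := by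
    intro i l
    rw [hBdef, phaseMatInv, Matrix.diagonal_pow, Matrix.mul_diagonal, Pi.pow_apply]
  set f : Fin n → Fin n → ℂ := fun j l => B (l + j) l with hf
  have hcoef : ∀ j : Fin n, circCoef A j k = (1/(n:ℂ)) * ∑ l, f j l := by
    intro j
    rw [circCoef]
    congr 1
    apply Finset.sum_congr rfl
    intro l _
    rw [hf]
    simp only
    rw [hB, mul_comm]
    congr 1
    rw [← zpow_natCast (omegaC n ^ (-(l:ℤ))), ← _root_.zpow_mul]
    congr 1
    ring
  have key : ∀ s : Fin n → ℂ,
      (∑ i : Fin n, ∑ l : Fin n, ‖(B - ∑ j : Fin n, s j • cycMat n ^ (j:ℕ)) i l‖^2)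
        = ∑ j : Fin n, ∑ l : Fin n, ‖f j l - s j‖^2 := by
    intro s
    have h1 : ∀ i l : Fin n,
        (B - ∑ j : Fin n, s j • cycMat n ^ (j:ℕ)) i l = B i l - s (i - l) := by
      intro i l; rw [Matrix.sub_apply, circ_entry]
    simp only [h1]
    rw [Finset.sum_comm]
    rw [show (∑ j : Fin n, ∑ l : Fin n, ‖f j l - s j‖^2)
        = ∑ l : Fin n, ∑ j : Fin n, ‖f j l - s j‖^2 from Finset.sum_comm]
    apply Finset.sum_congr rfl
    intro l _
    refine (Fintype.sum_equiv (Equiv.addLeft l) _ _ ?_).symm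
    intro j
    simp [hf, add_sub_cancel_left]
  unfold frobNorm
  apply Real.sqrt_le_sqrt
  rw [show circComp A k = ∑ j : Fin n, circCoef A j k • cycMat n ^ (j:ℕ) from rfl]
  rw [key (fun j => circCoef A j k), key r]
  apply Finset.sum_le_sum
  intro j _
  rw [hcoef j]
  exact mean_min hn (fun l => f j l) (r j)
end

section
/- Let D₁ and D₂ be fixed real n×n diagonal matrices and define f(Q) = ‖D₁ Q D₂‖_F². Then for all unitary n×n matrices Q and P, |f(Q) − f(P)| ≤ 2 ‖D₁²‖_F ‖D₂²‖_2 ‖Q − P‖_F, where ‖D₂²‖_2 is the spectral norm of D₂²; i.e., f is Lipschitz on the unitary group with constant 2‖D₁²‖_F ‖D₂²‖_2 with respect to the Frobenius (Hilbert–Schmidt) metric. -/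
open Matrix Finset

/-- The squared Frobenius norm of a complex matrix. -/
noncomputable def frobNormSq {n : ℕ} (M : Matrix (Fin n) (Fin n) ℂ) : ℝ :=
  ∑ i : Fin n, ∑ j : Fin n, ‖M i j‖ ^ 2

/-- The spectral norm (largest singular value) of a complex matrix: the supremum of the
Euclidean norms `‖Mx‖₂` over Euclidean-unit vectors `x`. -/
noncomputable def specNorm {n : ℕ} (M : Matrix (Fin n) (Fin n) ℂ) : ℝ :=
  sSup ((fun x : Fin n → ℂ => Real.sqrt (∑ i : Fin n, ‖M.mulVec x i‖ ^ 2)) ''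
    {x | ∑ i : Fin n, ‖x i‖ ^ 2 = 1})

lemma aux_norm_sq_entry {n : ℕ} (d₁ d₂ : Fin n → ℝ) (M : Matrix (Fin n) (Fin n) ℂ) (i j : Fin n) :
    ‖(Matrix.diagonal (fun i => (d₁ i : ℂ)) * M * Matrix.diagonal (fun i => (d₂ i : ℂ))) i j‖ ^ 2
      = d₁ i ^ 2 * d₂ j ^ 2 * ‖M i j‖ ^ 2 := by
  rw [Matrix.mul_diagonal, Matrix.diagonal_mul]
  simp only [norm_mul, Complex.norm_real, Real.norm_eq_abs, mul_pow, sq_abs]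
  ring

lemma aux_row_sum_one {n : ℕ} (Q : Matrix.unitaryGroup (Fin n) ℂ) (i : Fin n) :
    ∑ j, ‖(Q : Matrix (Fin n) (Fin n) ℂ) i j‖ ^ 2 = 1 := by
  have h : (Q : Matrix (Fin n) (Fin n) ℂ) * star (Q : Matrix (Fin n) (Fin n) ℂ) = 1 :=
    Matrix.mem_unitaryGroup_iff.mp Q.2
  have h2 : ∑ j, ((‖(Q : Matrix (Fin n) (Fin n) ℂ) i j‖ ^ 2 : ℝ) : ℂ) = 1 := by
    have h3 := congrArg (fun M => M i i) h
    simpa [Matrix.mul_apply, Matrix.star_apply, Matrix.one_apply, Complex.mul_conj,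
      Complex.normSq_eq_norm_sq] using h3
  exact_mod_cast h2

lemma aux_specNorm_diag_ge {n : ℕ} (d : Fin n → ℝ) (j : Fin n) :
    d j ^ 2 ≤ specNorm (Matrix.diagonal (fun i => (d i : ℂ)) * Matrix.diagonal (fun i => (d i : ℂ))) := by
  rw [Matrix.diagonal_mul_diagonal]
  set v : Fin n → ℂ := fun i => (d i : ℂ) * (d i : ℂ) with hv
  have hB : ∀ i, ‖v i‖ ≤ ∑ k, d k ^ 2 := by
    intro i
    have : ‖v i‖ = d i ^ 2 := by
      simp [hv, norm_mul, Complex.norm_real, ← abs_mul, ← sq, abs_sq]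
    rw [this]
    exact Finset.single_le_sum (f := fun k => d k ^ 2) (fun k _ => sq_nonneg _) (mem_univ i)
  have hBnn : (0:ℝ) ≤ ∑ k, d k ^ 2 := Finset.sum_nonneg fun _ _ => sq_nonneg _
  apply le_csSup
  · refine ⟨∑ k, d k ^ 2, ?_⟩
    rintro r ⟨x, hx, rfl⟩
    simp only [Set.mem_setOf_eq] at hx
    have h1 : ∑ i, ‖(Matrix.diagonal v).mulVec x i‖ ^ 2 ≤ (∑ k, d k ^ 2) ^ 2 := by
      calc ∑ i, ‖(Matrix.diagonal v).mulVec x i‖ ^ 2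
          ≤ ∑ i, (∑ k, d k ^ 2) ^ 2 * ‖x i‖ ^ 2 := by
            apply Finset.sum_le_sum
            intro i _
            rw [Matrix.mulVec_diagonal, norm_mul, mul_pow]
            exact mul_le_mul_of_nonneg_right
              (pow_le_pow_left₀ (norm_nonneg _) (hB i) 2) (sq_nonneg _)
        _ = (∑ k, d k ^ 2) ^ 2 := by rw [← Finset.mul_sum, hx, mul_one]
    calc Real.sqrt (∑ i, ‖(Matrix.diagonal v).mulVec x i‖ ^ 2)
        ≤ Real.sqrt ((∑ k, d k ^ 2) ^ 2) := Real.sqrt_le_sqrt h1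
      _ = ∑ k, d k ^ 2 := Real.sqrt_sq hBnn
  · refine ⟨Pi.single j 1, ?_, ?_⟩
    · have h5 : ∀ i : Fin n, ‖(Pi.single j 1 : Fin n → ℂ) i‖ ^ 2 = if i = j then (1:ℝ) else 0 := by
        intro i; by_cases h : i = j <;> simp [Pi.single_apply, h]
      simp only [Set.mem_setOf_eq, h5, Finset.sum_ite_eq' univ j,
        mem_univ, if_true]
    · have : ∀ i, ‖(Matrix.diagonal v).mulVec (Pi.single j 1) i‖ ^ 2
          = if i = j then (d j ^ 2) ^ 2 else 0 := by
        intro i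
        rw [Matrix.mulVec_diagonal]
        by_cases hij : i = j
        · subst hij
          simp [hv, norm_mul, Complex.norm_real, ← abs_mul, ← sq, abs_sq, mul_pow, sq_abs]
        · simp [Pi.single_apply, hij]
      simp only [this, Finset.sum_ite_eq' univ j, mem_univ, if_true]
      rw [Real.sqrt_sq (sq_nonneg _)]

lemma aux_sum_mul_le_sqrt {ι : Type*} [Fintype ι] (f g : ι → ℝ)
    (hfg : 0 ≤ ∑ i, f i * g i) :
    ∑ i, f i * g i ≤ Real.sqrt (∑ i, f i ^ 2) * Real.sqrt (∑ i, g i ^ 2) := by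
  rw [← Real.sqrt_mul (Finset.sum_nonneg fun _ _ => sq_nonneg _)]
  rw [Real.le_sqrt hfg (mul_nonneg (Finset.sum_nonneg fun _ _ => sq_nonneg _)
    (Finset.sum_nonneg fun _ _ => sq_nonneg _))]
  exact Finset.sum_mul_sq_le_sq_mul_sq _ _ _

/-- The function `f(Q) = ‖D₁ Q D₂‖_F²` is Lipschitz on the unitary group with constant
`2 ‖D₁²‖_F ‖D₂²‖_2` with respect to the Frobenius (Hilbert–Schmidt) metric. -/
theorem frobNormSq_lipschitz_on_unitary (n : ℕ) (d₁ d₂ : Fin n → ℝ) :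
    ∀ Q P : Matrix.unitaryGroup (Fin n) ℂ,
      |frobNormSq (Matrix.diagonal (fun i => (d₁ i : ℂ)) * (Q : Matrix (Fin n) (Fin n) ℂ) *
            Matrix.diagonal (fun i => (d₂ i : ℂ))) -
        frobNormSq (Matrix.diagonal (fun i => (d₁ i : ℂ)) * (P : Matrix (Fin n) (Fin n) ℂ) *
            Matrix.diagonal (fun i => (d₂ i : ℂ)))| ≤
      2 * frobNorm (Matrix.diagonal (fun i => (d₁ i : ℂ)) * Matrix.diagonal (fun i => (d₁ i : ℂ))) *
        specNorm (Matrix.diagonal (fun i => (d₂ i : ℂ)) * Matrix.diagonal (fun i => (d₂ i : ℂ))) *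
        frobNorm ((Q : Matrix (Fin n) (Fin n) ℂ) - (P : Matrix (Fin n) (Fin n) ℂ)) := by
  intro Q P
  rcases Nat.eq_zero_or_pos n with h0 | hn
  · subst h0
    simp [frobNormSq, frobNorm]
  obtain ⟨j0⟩ : Nonempty (Fin n) := ⟨⟨0, hn⟩⟩
  set Qm := (Q : Matrix (Fin n) (Fin n) ℂ) with hQm
  set Pm := (P : Matrix (Fin n) (Fin n) ℂ) with hPm
  set c := specNorm (Matrix.diagonal (fun i => (d₂ i : ℂ)) * Matrix.diagonal (fun i => (d₂ i : ℂ))) with hc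
  have hcj : ∀ j, d₂ j ^ 2 ≤ c := fun j => aux_specNorm_diag_ge d₂ j
  have hc0 : 0 ≤ c := le_trans (sq_nonneg (d₂ j0)) (hcj j0)
  set A : ℝ := ∑ i, (d₁ i ^ 2) ^ 2 with hA
  have hA0 : 0 ≤ A := Finset.sum_nonneg fun _ _ => sq_nonneg _
  have hD1 : frobNorm (Matrix.diagonal (fun i => (d₁ i : ℂ)) * Matrix.diagonal (fun i => (d₁ i : ℂ)))
      = Real.sqrt A := by
    rw [Matrix.diagonal_mul_diagonal]
    unfold frobNorm
    congr 1
    rw [hA]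
    apply Finset.sum_congr rfl
    intro i _
    have : ∀ j, ‖Matrix.diagonal (fun k => (d₁ k : ℂ) * (d₁ k : ℂ)) i j‖ ^ 2
        = if j = i then (d₁ i ^ 2) ^ 2 else 0 := by
      intro j
      by_cases hij : i = j
      · subst hij
        simp [Matrix.diagonal_apply_eq, norm_mul, Complex.norm_real, mul_pow, sq_abs]
        ring
      · simp [Matrix.diagonal_apply_ne _ hij, Ne.symm hij]
    simp only [this, Finset.sum_ite_eq' univ i, mem_univ, if_true]
  -- entrywise description of frobNormSq
  have hf : ∀ M : Matrix (Fin n) (Fin n) ℂ,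
      frobNormSq (Matrix.diagonal (fun i => (d₁ i : ℂ)) * M * Matrix.diagonal (fun i => (d₂ i : ℂ)))
        = ∑ p : Fin n × Fin n, d₁ p.1 ^ 2 * d₂ p.2 ^ 2 * ‖M p.1 p.2‖ ^ 2 := by
    intro M
    rw [Fintype.sum_prod_type]
    unfold frobNormSq
    exact Finset.sum_congr rfl fun i _ => Finset.sum_congr rfl fun j _ =>
      aux_norm_sq_entry d₁ d₂ M i j
  rw [hf Qm, hf Pm, hD1, ← Finset.sum_sub_distrib]
  set F : Fin n × Fin n → ℝ :=
    fun p => d₁ p.1 ^ 2 * d₂ p.2 ^ 2 * (‖Qm p.1 p.2‖ + ‖Pm p.1 p.2‖) with hF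
  set G : Fin n × Fin n → ℝ := fun p => ‖Qm p.1 p.2 - Pm p.1 p.2‖ with hG
  have hFnn : ∀ p, 0 ≤ F p := fun p => by positivity
  have hGnn : ∀ p, 0 ≤ G p := fun p => norm_nonneg _
  have step1 : |∑ p : Fin n × Fin n,
      (d₁ p.1 ^ 2 * d₂ p.2 ^ 2 * ‖Qm p.1 p.2‖ ^ 2 - d₁ p.1 ^ 2 * d₂ p.2 ^ 2 * ‖Pm p.1 p.2‖ ^ 2)|
      ≤ ∑ p : Fin n × Fin n, F p * G p := by
    refine le_trans (Finset.abs_sum_le_sum_abs _ _) (Finset.sum_le_sum fun p _ => ?_)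
    have h1 : d₁ p.1 ^ 2 * d₂ p.2 ^ 2 * ‖Qm p.1 p.2‖ ^ 2 - d₁ p.1 ^ 2 * d₂ p.2 ^ 2 * ‖Pm p.1 p.2‖ ^ 2
        = (d₁ p.1 ^ 2 * d₂ p.2 ^ 2 * (‖Qm p.1 p.2‖ + ‖Pm p.1 p.2‖)) *
          (‖Qm p.1 p.2‖ - ‖Pm p.1 p.2‖) := by ring
    rw [h1, abs_mul]
    have h2 : |d₁ p.1 ^ 2 * d₂ p.2 ^ 2 * (‖Qm p.1 p.2‖ + ‖Pm p.1 p.2‖)| = F p := by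
      rw [hF]; exact abs_of_nonneg (by positivity)
    rw [h2]
    refine mul_le_mul_of_nonneg_left ?_ (hFnn p)
    exact abs_norm_sub_norm_le _ _
  have step2 : ∑ p : Fin n × Fin n, F p * G p
      ≤ Real.sqrt (∑ p : Fin n × Fin n, F p ^ 2) * Real.sqrt (∑ p : Fin n × Fin n, G p ^ 2) :=
    aux_sum_mul_le_sqrt F G (Finset.sum_nonneg fun p _ => mul_nonneg (hFnn p) (hGnn p))
  have hFsum : ∑ p : Fin n × Fin n, F p ^ 2 ≤ 4 * c ^ 2 * A := by
    have pt : ∀ p : Fin n × Fin n, F p ^ 2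
        ≤ (d₁ p.1 ^ 2) ^ 2 * c ^ 2 * (2 * (‖Qm p.1 p.2‖ ^ 2 + ‖Pm p.1 p.2‖ ^ 2)) := by
      intro p
      have h3 : (‖Qm p.1 p.2‖ + ‖Pm p.1 p.2‖) ^ 2 ≤ 2 * (‖Qm p.1 p.2‖ ^ 2 + ‖Pm p.1 p.2‖ ^ 2) := by
        nlinarith [sq_nonneg (‖Qm p.1 p.2‖ - ‖Pm p.1 p.2‖)]
      have h4 : (d₂ p.2 ^ 2) ^ 2 ≤ c ^ 2 :=
        pow_le_pow_left₀ (sq_nonneg _) (hcj p.2) 2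
      have hFp : F p ^ 2 = (d₁ p.1 ^ 2) ^ 2 * (d₂ p.2 ^ 2) ^ 2 *
          (‖Qm p.1 p.2‖ + ‖Pm p.1 p.2‖) ^ 2 := by rw [hF]; ring
      rw [hFp]
      have := mul_le_mul h4 h3 (sq_nonneg _) (sq_nonneg c)
      calc (d₁ p.1 ^ 2) ^ 2 * (d₂ p.2 ^ 2) ^ 2 * (‖Qm p.1 p.2‖ + ‖Pm p.1 p.2‖) ^ 2
          = (d₁ p.1 ^ 2) ^ 2 * ((d₂ p.2 ^ 2) ^ 2 * (‖Qm p.1 p.2‖ + ‖Pm p.1 p.2‖) ^ 2) := by ring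
        _ ≤ (d₁ p.1 ^ 2) ^ 2 * (c ^ 2 * (2 * (‖Qm p.1 p.2‖ ^ 2 + ‖Pm p.1 p.2‖ ^ 2))) :=
            mul_le_mul_of_nonneg_left this (sq_nonneg _)
        _ = (d₁ p.1 ^ 2) ^ 2 * c ^ 2 * (2 * (‖Qm p.1 p.2‖ ^ 2 + ‖Pm p.1 p.2‖ ^ 2)) := by ring
    calc ∑ p : Fin n × Fin n, F p ^ 2
        ≤ ∑ p : Fin n × Fin n,
            (d₁ p.1 ^ 2) ^ 2 * c ^ 2 * (2 * (‖Qm p.1 p.2‖ ^ 2 + ‖Pm p.1 p.2‖ ^ 2)) :=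
          Finset.sum_le_sum fun p _ => pt p
      _ = ∑ i, ∑ j, (d₁ i ^ 2) ^ 2 * c ^ 2 * (2 * (‖Qm i j‖ ^ 2 + ‖Pm i j‖ ^ 2)) :=
          Fintype.sum_prod_type _
      _ = ∑ i, (d₁ i ^ 2) ^ 2 * c ^ 2 * 4 := by
          apply Finset.sum_congr rfl
          intro i _
          rw [← Finset.mul_sum]
          congr 1
          rw [← Finset.mul_sum, Finset.sum_add_distrib, aux_row_sum_one Q i, aux_row_sum_one P i]
          norm_num
      _ = 4 * c ^ 2 * A := by rw [hA, ← Finset.sum_mul, ← Finset.sum_mul]; ring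
  have hGsum : ∑ p : Fin n × Fin n, G p ^ 2 = ∑ i, ∑ j, ‖(Qm - Pm) i j‖ ^ 2 := by
    rw [Fintype.sum_prod_type]
    exact Finset.sum_congr rfl fun i _ => Finset.sum_congr rfl fun j _ => by
      simp [hG, Matrix.sub_apply]
  have step3 : Real.sqrt (∑ p : Fin n × Fin n, F p ^ 2) ≤ 2 * c * Real.sqrt A := by
    calc Real.sqrt (∑ p : Fin n × Fin n, F p ^ 2) ≤ Real.sqrt (4 * c ^ 2 * A) :=
        Real.sqrt_le_sqrt hFsum
      _ = 2 * c * Real.sqrt A := by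
          rw [show (4:ℝ) * c ^ 2 * A = (2 * c) ^ 2 * A by ring,
            Real.sqrt_mul (sq_nonneg _), Real.sqrt_sq (by positivity)]
  calc |∑ p : Fin n × Fin n,
      (d₁ p.1 ^ 2 * d₂ p.2 ^ 2 * ‖Qm p.1 p.2‖ ^ 2 - d₁ p.1 ^ 2 * d₂ p.2 ^ 2 * ‖Pm p.1 p.2‖ ^ 2)|
      ≤ ∑ p : Fin n × Fin n, F p * G p := step1
    _ ≤ Real.sqrt (∑ p : Fin n × Fin n, F p ^ 2) * Real.sqrt (∑ p : Fin n × Fin n, G p ^ 2) := step2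
    _ ≤ (2 * c * Real.sqrt A) * Real.sqrt (∑ p : Fin n × Fin n, G p ^ 2) :=
        mul_le_mul_of_nonneg_right step3 (Real.sqrt_nonneg _)
    _ = 2 * Real.sqrt A * c * frobNorm (Qm - Pm) := by
        rw [hGsum]; unfold frobNorm; ring
end

section
/- Let D_A, D_B, D_{ΔA}, D_{ΔB} be fixed real n×n diagonal matrices with all diagonal entries of D_A positive, and let A = Q₁ D_A Q₂, B = Q₃ D_B Q₄, ΔA = P₁ D_{ΔA} P₂, ΔB = P₃ D_{ΔB} P₄ with Q₁,…,Q₄, P₁,…,P₄ independent Haar-distributed n×n unitary matrices. Set X = ‖ΔA·ΔB‖_F, Z = ‖AB‖_F², μ_Z = E[Z], and for 0 < ε < 1 let G = {Z ≥ (1−ε)μ_Z}. Then E[X/√Z] ≤ (1/√(1−ε)) · ‖D_{ΔA}‖_F ‖D_{ΔB}‖_F / (‖D_A‖_F ‖D_B‖_F) + C √(P(G^c)), where C = √(E[X²]) / (σ_min(A) ‖D_B‖_F) and σ_min(A) is the smallest singular value of A (which equals the smallest diagonal entry of D_A). -/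
open Matrix Finset MeasureTheory

/-- Matrices inherit the product measurable structure of their entries. -/
noncomputable instance matrixMeasurableSpace {m n : ℕ} :
    MeasurableSpace (Matrix (Fin m) (Fin n) ℂ) :=
  (inferInstance : MeasurableSpace (Fin m → Fin n → ℂ))

/-- `Q₁ D Q₂` for a real diagonal matrix `D` (given by its diagonal `d`) and unitary `Q₁, Q₂`. -/
noncomputable def rotDiag {n : ℕ} (d : Fin n → ℝ)
    (Q₁ Q₂ : Matrix.unitaryGroup (Fin n) ℂ) : Matrix (Fin n) (Fin n) ℂ :=
  (Q₁ : Matrix (Fin n) (Fin n) ℂ) * Matrix.diagonal (fun i => (d i : ℂ)) *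
    (Q₂ : Matrix (Fin n) (Fin n) ℂ)

/-- The squared Frobenius norm of a complex matrix. -/
noncomputable def frobSq {n : ℕ} (M : Matrix (Fin n) (Fin n) ℂ) : ℝ :=
  ∑ i : Fin n, ∑ j : Fin n, ‖M i j‖ ^ 2

namespace FOEB

variable {n : ℕ}


lemma measurable_entry (i j : Fin n) :
    Measurable fun M : Matrix (Fin n) (Fin n) ℂ => M i j :=
  (measurable_pi_apply j).comp (measurable_pi_apply i)

lemma measurable_matmul {α : Type*} [MeasurableSpace α] {f g : α → Matrix (Fin n) (Fin n) ℂ}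
    (hf : Measurable f) (hg : Measurable g) : Measurable (fun a => f a * g a) := by
  apply measurable_pi_lambda; intro i
  apply measurable_pi_lambda; intro j
  simp only [Matrix.mul_apply]
  refine Finset.measurable_sum _ fun k _ => Measurable.mul ?_ ?_
  · exact (measurable_entry i k).comp hf
  · exact (measurable_entry k j).comp hg

lemma measurable_frobSq_comp {α : Type*} [MeasurableSpace α] {f : α → Matrix (Fin n) (Fin n) ℂ}
    (hf : Measurable f) : Measurable (fun a => frobSq (f a)) := by
  unfold frobSq
  exact Finset.measurable_sum _ fun i _ => Finset.measurable_sum _ fun j _ =>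
    (((measurable_entry i j).comp hf).norm).pow_const 2

lemma measurable_mul_matrix :
    Measurable fun p : Matrix (Fin n) (Fin n) ℂ × Matrix (Fin n) (Fin n) ℂ => p.1 * p.2 := by
  apply measurable_pi_lambda; intro i
  apply measurable_pi_lambda; intro j
  have h : (fun p : Matrix (Fin n) (Fin n) ℂ × Matrix (Fin n) (Fin n) ℂ => (p.1 * p.2) i j)
      = fun p => ∑ k, p.1 i k * p.2 k j := by
    ext p; simp [Matrix.mul_apply]
  rw [show (fun p : Matrix (Fin n) (Fin n) ℂ × Matrix (Fin n) (Fin n) ℂ => (p.1 * p.2) i j)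
      = fun p => ∑ k, p.1 i k * p.2 k j from h]
  exact Finset.measurable_sum _ fun k _ =>
    ((measurable_entry i k).comp measurable_fst).mul ((measurable_entry k j).comp measurable_snd)

instance : MeasurableMul₂ (Matrix.unitaryGroup (Fin n) ℂ) :=
  ⟨(measurable_mul_matrix.comp
      ((measurable_subtype_coe.comp measurable_fst).prodMk
        (measurable_subtype_coe.comp measurable_snd))).subtype_mk⟩

lemma measurable_frobSq : Measurable (frobSq (n := n)) := by
  unfold frobSq
  exact Finset.measurable_sum _ fun i _ => Finset.measurable_sum _ fun j _ =>
    ((measurable_entry i j).norm.pow_const 2)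

lemma frobSq_nonneg (M : Matrix (Fin n) (Fin n) ℂ) : 0 ≤ frobSq M :=
  Finset.sum_nonneg fun _ _ => Finset.sum_nonneg fun _ _ => sq_nonneg _

lemma frobSq_eq_re_trace (M : Matrix (Fin n) (Fin n) ℂ) :
    frobSq M = (Matrix.trace (Mᴴ * M)).re := by
  unfold frobSq
  rw [Matrix.trace]
  rw [Complex.re_sum]
  rw [Finset.sum_comm]
  refine Finset.sum_congr rfl fun j _ => ?_
  rw [Matrix.diag_apply, Matrix.mul_apply, Complex.re_sum]
  refine Finset.sum_congr rfl fun i _ => ?_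
  rw [Matrix.conjTranspose_apply]
  rw [Complex.star_def, ← Complex.normSq_eq_conj_mul_self]
  simp [Complex.normSq_eq_norm_sq, ← Complex.ofReal_pow]

lemma frobSq_unitary_mul (U : Matrix.unitaryGroup (Fin n) ℂ) (M : Matrix (Fin n) (Fin n) ℂ) :
    frobSq ((U : Matrix (Fin n) (Fin n) ℂ) * M) = frobSq M := by
  rw [frobSq_eq_re_trace, frobSq_eq_re_trace]
  congr 1
  rw [Matrix.conjTranspose_mul, Matrix.mul_assoc, ← Matrix.mul_assoc (U : Matrix (Fin n) (Fin n) ℂ)ᴴ]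
  have h : (U : Matrix (Fin n) (Fin n) ℂ)ᴴ * (U : Matrix (Fin n) (Fin n) ℂ) = 1 := by
    have := (Matrix.mem_unitaryGroup_iff' (A := (U : Matrix (Fin n) (Fin n) ℂ))).mp U.2
    simpa [Matrix.star_eq_conjTranspose] using this
  rw [h, Matrix.one_mul]

lemma frobSq_mul_unitary (M : Matrix (Fin n) (Fin n) ℂ) (U : Matrix.unitaryGroup (Fin n) ℂ) :
    frobSq (M * (U : Matrix (Fin n) (Fin n) ℂ)) = frobSq M := by
  rw [frobSq_eq_re_trace, frobSq_eq_re_trace]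
  congr 1
  rw [Matrix.conjTranspose_mul, Matrix.mul_assoc]
  rw [Matrix.trace_mul_comm]
  rw [Matrix.mul_assoc, Matrix.mul_assoc M]
  have h : (U : Matrix (Fin n) (Fin n) ℂ) * (U : Matrix (Fin n) (Fin n) ℂ)ᴴ = 1 := by
    have := (Matrix.mem_unitaryGroup_iff (A := (U : Matrix (Fin n) (Fin n) ℂ))).mp U.2
    simpa [Matrix.star_eq_conjTranspose] using this
  rw [h, Matrix.mul_one]

lemma norm_sq_eq_re (z : ℂ) : ‖z‖ ^ 2 = ((starRingEnd ℂ) z * z).re := by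
  rw [← Complex.normSq_eq_conj_mul_self]
  simp [Complex.normSq_eq_norm_sq, ← Complex.ofReal_pow]

lemma col_norm_one (U : Matrix.unitaryGroup (Fin n) ℂ) (j : Fin n) :
    ∑ i : Fin n, ‖(U : Matrix (Fin n) (Fin n) ℂ) i j‖ ^ 2 = 1 := by
  have h : ((U : Matrix (Fin n) (Fin n) ℂ)ᴴ * (U : Matrix (Fin n) (Fin n) ℂ)) j j = 1 := by
    have h2 := (Matrix.mem_unitaryGroup_iff' (A := (U : Matrix (Fin n) (Fin n) ℂ))).mp U.2
    rw [Matrix.star_eq_conjTranspose] at h2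
    rw [h2]; simp
  rw [Matrix.mul_apply] at h
  have := congrArg Complex.re h
  rw [Complex.re_sum] at this
  simp only [Matrix.conjTranspose_apply, Complex.one_re] at this
  calc ∑ i : Fin n, ‖(U : Matrix (Fin n) (Fin n) ℂ) i j‖ ^ 2
      = ∑ i : Fin n, ((starRingEnd ℂ) ((U : Matrix (Fin n) (Fin n) ℂ) i j)
        * (U : Matrix (Fin n) (Fin n) ℂ) i j).re :=
        Finset.sum_congr rfl fun i _ => norm_sq_eq_re _
    _ = 1 := by simpa using this

lemma entry_norm_sq_le_one (U : Matrix.unitaryGroup (Fin n) ℂ) (i j : Fin n) :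
    ‖(U : Matrix (Fin n) (Fin n) ℂ) i j‖ ^ 2 ≤ 1 := by
  rw [← col_norm_one U j]
  exact Finset.single_le_sum (f := fun k => ‖(U : Matrix (Fin n) (Fin n) ℂ) k j‖ ^ 2)
    (fun k _ => sq_nonneg _) (Finset.mem_univ i)

lemma frobSq_diag (d e : Fin n → ℝ) (M : Matrix (Fin n) (Fin n) ℂ) :
    frobSq (Matrix.diagonal (fun i => (d i : ℂ)) * M * Matrix.diagonal (fun j => (e j : ℂ)))
      = ∑ i : Fin n, ∑ j : Fin n, d i ^ 2 * e j ^ 2 * ‖M i j‖ ^ 2 := by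
  unfold frobSq
  refine Finset.sum_congr rfl fun i _ => Finset.sum_congr rfl fun j _ => ?_
  have hentry : (Matrix.diagonal (fun i => (d i : ℂ)) * M * Matrix.diagonal (fun j => (e j : ℂ))) i j
      = (d i : ℂ) * M i j * (e j : ℂ) := by
    rw [Matrix.mul_diagonal, Matrix.diagonal_mul]
  rw [hentry]
  rw [norm_mul, norm_mul, Complex.norm_real, Complex.norm_real, Real.norm_eq_abs, Real.norm_eq_abs]
  rw [mul_pow, mul_pow, sq_abs, sq_abs]
  ring

noncomputable def hfun (d e : Fin n → ℝ) (u : Matrix.unitaryGroup (Fin n) ℂ) : ℝ :=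
  ∑ i : Fin n, ∑ j : Fin n, d i ^ 2 * e j ^ 2 * ‖(u : Matrix (Fin n) (Fin n) ℂ) i j‖ ^ 2

lemma frobSq_rot_mul (d e : Fin n → ℝ) (Q0 Q1 Q2 Q3 : Matrix.unitaryGroup (Fin n) ℂ) :
    frobSq (rotDiag d Q0 Q1 * rotDiag e Q2 Q3) = hfun d e (Q1 * Q2) := by
  unfold hfun
  have h1 : rotDiag d Q0 Q1 * rotDiag e Q2 Q3
      = (Q0 : Matrix (Fin n) (Fin n) ℂ) *
        (Matrix.diagonal (fun i => (d i : ℂ)) *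
          ((Q1 * Q2 : Matrix.unitaryGroup (Fin n) ℂ) : Matrix (Fin n) (Fin n) ℂ) *
          Matrix.diagonal (fun j => (e j : ℂ))) * (Q3 : Matrix (Fin n) (Fin n) ℂ) := by
    simp only [rotDiag, MulMemClass.coe_mul, Matrix.mul_assoc]
  rw [h1, frobSq_mul_unitary, frobSq_unitary_mul, frobSq_diag]


/-- The permutation unitary matrix `P` with `P a b = [a = σ b]`, so `(P * M) i j = M (σ⁻¹ i) j`. -/
def permU (σ : Equiv.Perm (Fin n)) : Matrix.unitaryGroup (Fin n) ℂ :=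
  ⟨Matrix.of fun a b => if a = σ b then 1 else 0, by
    rw [Matrix.mem_unitaryGroup_iff']
    ext a b
    simp only [Matrix.mul_apply, Matrix.star_eq_conjTranspose,
      Matrix.conjTranspose_apply, Matrix.of_apply, Matrix.one_apply, apply_ite
        (starRingEnd ℂ), _root_.map_one, _root_.map_zero]
    rw [Finset.sum_eq_single (σ a)]
    · by_cases h : a = b
      · simp [h]
      · have : ¬ σ a = σ b := fun hc => h (Equiv.injective σ hc)
        simp [h, this]
    · intro l _ hl
      simp [hl]
    · simp⟩

lemma permU_mul_apply (σ : Equiv.Perm (Fin n)) (u : Matrix.unitaryGroup (Fin n) ℂ) (i j : Fin n) :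
    ((permU σ * u : Matrix.unitaryGroup (Fin n) ℂ) : Matrix (Fin n) (Fin n) ℂ) i j
      = (u : Matrix (Fin n) (Fin n) ℂ) (σ⁻¹ i) j := by
  show ((permU σ : Matrix (Fin n) (Fin n) ℂ) * (u : Matrix (Fin n) (Fin n) ℂ)) i j = _
  rw [Matrix.mul_apply]
  rw [Finset.sum_eq_single (σ⁻¹ i)]
  · simp [permU]
  · intro l _ hl
    have : i ≠ σ l := fun h => hl (by simp [h])
    simp [permU, this]
  · simp


lemma measurable_entry_norm_sq (i j : Fin n) :
    Measurable fun u : Matrix.unitaryGroup (Fin n) ℂ =>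
      ‖(u : Matrix (Fin n) (Fin n) ℂ) i j‖ ^ 2 :=
  (((measurable_entry i j).comp measurable_subtype_coe).norm).pow_const 2

lemma integrable_of_bounded {α : Type*} [MeasurableSpace α] (P : Measure α) [IsFiniteMeasure P]
    {f : α → ℝ} (hm : Measurable f) (C : ℝ) (hb : ∀ x, |f x| ≤ C) : Integrable f P :=
  (integrable_const C).mono' hm.aestronglyMeasurable
    (Filter.Eventually.of_forall fun x => by simpa [Real.norm_eq_abs] using hb x)

variable (μ : Measure (Matrix.unitaryGroup (Fin n) ℂ)) [IsProbabilityMeasure μ] [μ.IsHaarMeasure]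

lemma integral_entry_sq (hn : 0 < n) (i j : Fin n) :
    ∫ u, ‖(u : Matrix (Fin n) (Fin n) ℂ) i j‖ ^ 2 ∂μ = 1 / n := by
  have hint : ∀ k l : Fin n, Integrable
      (fun u : Matrix.unitaryGroup (Fin n) ℂ => ‖(u : Matrix (Fin n) (Fin n) ℂ) k l‖ ^ 2) μ :=
    fun k l => integrable_of_bounded μ (measurable_entry_norm_sq k l) 1
      (fun u => by rw [abs_of_nonneg (sq_nonneg _)]; exact entry_norm_sq_le_one u k l)
  have hconst : ∀ k : Fin n,
      ∫ u, ‖(u : Matrix (Fin n) (Fin n) ℂ) k j‖ ^ 2 ∂μ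
        = ∫ u, ‖(u : Matrix (Fin n) (Fin n) ℂ) i j‖ ^ 2 ∂μ := by
    intro k
    have h := integral_mul_left_eq_self (μ := μ)
      (fun u : Matrix.unitaryGroup (Fin n) ℂ => ‖(u : Matrix (Fin n) (Fin n) ℂ) i j‖ ^ 2)
      (permU (Equiv.swap i k))
    rw [← h]
    refine integral_congr_ae (Filter.Eventually.of_forall fun u => ?_)
    show ‖(u : Matrix (Fin n) (Fin n) ℂ) k j‖ ^ 2 = ‖((permU (Equiv.swap i k) * u :
        Matrix.unitaryGroup (Fin n) ℂ) : Matrix (Fin n) (Fin n) ℂ) i j‖ ^ 2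
    rw [permU_mul_apply, Equiv.swap_inv, Equiv.swap_apply_left]
  have hsum : (∑ k : Fin n, ∫ u, ‖(u : Matrix (Fin n) (Fin n) ℂ) k j‖ ^ 2 ∂μ) = 1 := by
    rw [← integral_finset_sum _ (fun k _ => hint k j)]
    simp_rw [col_norm_one]
    simp
  rw [Finset.sum_congr rfl (fun k _ => hconst k)] at hsum
  rw [Finset.sum_const, Finset.card_univ, Fintype.card_fin, nsmul_eq_mul] at hsum
  field_simp at hsum ⊢
  linarith [hsum]

lemma map_pair (i j : Fin 8) (hij : i ≠ j) :
    Measure.map (fun q : Fin 8 → Matrix.unitaryGroup (Fin n) ℂ => (q i, q j))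
      (Measure.pi fun _ : Fin 8 => μ) = μ.prod μ := by
  have hT : Measurable fun q : Fin 8 → Matrix.unitaryGroup (Fin n) ℂ => (q i, q j) :=
    (measurable_pi_apply i).prodMk (measurable_pi_apply j)
  refine (Measure.prod_eq (μ := μ) (ν := μ)
    (μν := Measure.map (fun q : Fin 8 → Matrix.unitaryGroup (Fin n) ℂ => (q i, q j))
      (Measure.pi fun _ : Fin 8 => μ)) fun s t hs ht => ?_).symm
  rw [Measure.map_apply hT (hs.prod ht)]
  have hpre : (fun q : Fin 8 → Matrix.unitaryGroup (Fin n) ℂ => (q i, q j)) ⁻¹' (s ×ˢ t)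
      = Set.pi Set.univ (fun k => if k = i then s else if k = j then t else Set.univ) := by
    ext q
    simp only [Set.mem_preimage, Set.mem_prod, Set.mem_pi, Set.mem_univ, forall_true_left]
    constructor
    · rintro ⟨h1, h2⟩ k
      by_cases hk : k = i
      · subst hk; simp [h1]
      · by_cases hk' : k = j
        · subst hk'; simp [hk, h2]
        · simp [hk, hk']
    · intro h
      refine ⟨?_, ?_⟩
      · have := h i; simpa using this
      · have := h j; simpa [Ne.symm hij] using this
  rw [hpre, Measure.pi_pi]
  rw [← Finset.mul_prod_erase Finset.univ _ (Finset.mem_univ i)]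
  rw [← Finset.mul_prod_erase (Finset.univ.erase i) _
    (Finset.mem_erase.mpr ⟨Ne.symm hij, Finset.mem_univ j⟩)]
  have h1 : (if i = i then s else if i = j then t else Set.univ) = s := by simp
  have h2 : (if j = i then s else if j = j then t else Set.univ) = t := by
    simp [Ne.symm hij]
  rw [h1, h2]
  have h3 : ∀ k ∈ (Finset.univ.erase i).erase j,
      μ (if k = i then s else if k = j then t else Set.univ) = 1 := by
    intro k hk
    rw [Finset.mem_erase, Finset.mem_erase] at hk
    rw [if_neg hk.2.1, if_neg hk.1]
    exact measure_univ
  rw [Finset.prod_congr rfl h3]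
  simp [mul_assoc]

lemma integral_pair (h : Matrix.unitaryGroup (Fin n) ℂ → ℝ) (hm : Measurable h) (C : ℝ)
    (hb : ∀ x, |h x| ≤ C) (i j : Fin 8) (hij : i ≠ j) :
    ∫ q : Fin 8 → Matrix.unitaryGroup (Fin n) ℂ, h (q i * q j)
        ∂(Measure.pi fun _ : Fin 8 => μ) = ∫ u, h u ∂μ := by
  have hT : Measurable fun q : Fin 8 → Matrix.unitaryGroup (Fin n) ℂ => (q i, q j) :=
    (measurable_pi_apply i).prodMk (measurable_pi_apply j)
  have hmul : Measurable fun p : Matrix.unitaryGroup (Fin n) ℂ × Matrix.unitaryGroup (Fin n) ℂ =>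
      p.1 * p.2 := measurable_mul
  have key : ∫ q : Fin 8 → Matrix.unitaryGroup (Fin n) ℂ, h (q i * q j)
        ∂(Measure.pi fun _ : Fin 8 => μ)
      = ∫ p : Matrix.unitaryGroup (Fin n) ℂ × Matrix.unitaryGroup (Fin n) ℂ, h (p.1 * p.2)
        ∂(μ.prod μ) := by
    have hsm : AEStronglyMeasurable
        (fun p : Matrix.unitaryGroup (Fin n) ℂ × Matrix.unitaryGroup (Fin n) ℂ => h (p.1 * p.2))
        (Measure.map (fun q : Fin 8 → Matrix.unitaryGroup (Fin n) ℂ => (q i, q j))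
          (Measure.pi fun _ : Fin 8 => μ)) :=
      Measurable.aestronglyMeasurable (hm.comp hmul)
    rw [← map_pair μ i j hij]
    exact (integral_map hT.aemeasurable hsm).symm
  rw [key]
  have hInt : Integrable (fun p : Matrix.unitaryGroup (Fin n) ℂ × Matrix.unitaryGroup (Fin n) ℂ =>
      h (p.1 * p.2)) (μ.prod μ) :=
    integrable_of_bounded _ (hm.comp hmul) C (fun p => hb _)
  rw [integral_prod _ hInt]
  have : ∀ a, ∫ b, h (a * b) ∂μ = ∫ u, h u ∂μ := fun a => integral_mul_left_eq_self h a
  rw [integral_congr_ae (Filter.Eventually.of_forall this)]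
  simp



lemma hfun_measurable (d e : Fin n → ℝ) : Measurable (hfun (n := n) d e) := by
  unfold hfun
  exact Finset.measurable_sum _ fun i _ => Finset.measurable_sum _ fun j _ =>
    (measurable_entry_norm_sq i j).const_mul _

lemma hfun_nonneg (d e : Fin n → ℝ) (u : Matrix.unitaryGroup (Fin n) ℂ) : 0 ≤ hfun d e u := by
  unfold hfun; positivity

lemma hfun_le (d e : Fin n → ℝ) (u : Matrix.unitaryGroup (Fin n) ℂ) :
    hfun d e u ≤ (∑ i : Fin n, d i ^ 2) * (∑ j : Fin n, e j ^ 2) := by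
  unfold hfun
  rw [Finset.sum_mul_sum]
  refine Finset.sum_le_sum fun i _ => Finset.sum_le_sum fun j _ => ?_
  have h := entry_norm_sq_le_one u i j
  have h0 : (0:ℝ) ≤ ‖(u : Matrix (Fin n) (Fin n) ℂ) i j‖ ^ 2 := sq_nonneg _
  nlinarith [sq_nonneg (d i), sq_nonneg (e j), sq_nonneg (d i * e j)]

lemma hfun_lower (hn : 0 < n) (dA e : Fin n → ℝ) (hdA : ∀ i, 0 < dA i)
    (u : Matrix.unitaryGroup (Fin n) ℂ) :
    (⨅ i : Fin n, dA i) ^ 2 * (∑ j : Fin n, e j ^ 2) ≤ hfun dA e u := by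
  haveI : Nonempty (Fin n) := ⟨⟨0, hn⟩⟩
  have hbdd : BddBelow (Set.range dA) := ⟨0, by rintro x ⟨i, rfl⟩; exact (hdA i).le⟩
  have hm_le : ∀ i, (⨅ i : Fin n, dA i) ≤ dA i := fun i => ciInf_le hbdd i
  have hm0 : 0 ≤ ⨅ i : Fin n, dA i := le_ciInf fun i => (hdA i).le
  unfold hfun
  rw [Finset.sum_comm, Finset.mul_sum]
  refine Finset.sum_le_sum fun j _ => ?_
  have hcol := col_norm_one u j
  calc (⨅ i : Fin n, dA i) ^ 2 * e j ^ 2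
      = ∑ i : Fin n, (⨅ i : Fin n, dA i) ^ 2 * e j ^ 2 * ‖(u : Matrix (Fin n) (Fin n) ℂ) i j‖ ^ 2 := by
        simp_rw [mul_assoc, ← Finset.mul_sum]
        rw [hcol, mul_one]
    _ ≤ ∑ i : Fin n, dA i ^ 2 * e j ^ 2 * ‖(u : Matrix (Fin n) (Fin n) ℂ) i j‖ ^ 2 := by
        refine Finset.sum_le_sum fun i _ => ?_
        have : (⨅ i : Fin n, dA i) ^ 2 ≤ dA i ^ 2 := pow_le_pow_left₀ hm0 (hm_le i) 2
        have h2 : (0:ℝ) ≤ e j ^ 2 * ‖(u : Matrix (Fin n) (Fin n) ℂ) i j‖ ^ 2 := by positivity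
        calc (⨅ i : Fin n, dA i) ^ 2 * e j ^ 2 * ‖(u : Matrix (Fin n) (Fin n) ℂ) i j‖ ^ 2
            = (⨅ i : Fin n, dA i) ^ 2 * (e j ^ 2 * ‖(u : Matrix (Fin n) (Fin n) ℂ) i j‖ ^ 2) := by ring
          _ ≤ dA i ^ 2 * (e j ^ 2 * ‖(u : Matrix (Fin n) (Fin n) ℂ) i j‖ ^ 2) :=
              mul_le_mul_of_nonneg_right this h2
          _ = dA i ^ 2 * e j ^ 2 * ‖(u : Matrix (Fin n) (Fin n) ℂ) i j‖ ^ 2 := by ring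

lemma integral_hfun (hn : 0 < n) (d e : Fin n → ℝ) :
    ∫ u, hfun d e u ∂μ = (∑ i : Fin n, d i ^ 2) * (∑ j : Fin n, e j ^ 2) / n := by
  have hint : ∀ i j : Fin n, Integrable
      (fun u : Matrix.unitaryGroup (Fin n) ℂ =>
        d i ^ 2 * e j ^ 2 * ‖(u : Matrix (Fin n) (Fin n) ℂ) i j‖ ^ 2) μ := by
    intro i j
    exact ((integrable_of_bounded μ (measurable_entry_norm_sq i j) 1
      (fun u => by rw [abs_of_nonneg (sq_nonneg _)]; exact entry_norm_sq_le_one u i j)).const_mul _)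
  unfold hfun
  rw [integral_finset_sum _ (fun i _ => integrable_finset_sum _ (fun j _ => hint i j))]
  have : ∀ i : Fin n, (∫ u, ∑ j : Fin n,
      d i ^ 2 * e j ^ 2 * ‖(u : Matrix (Fin n) (Fin n) ℂ) i j‖ ^ 2 ∂μ)
      = ∑ j : Fin n, d i ^ 2 * e j ^ 2 / n := by
    intro i
    rw [integral_finset_sum _ (fun j _ => hint i j)]
    refine Finset.sum_congr rfl fun j _ => ?_
    rw [integral_const_mul, integral_entry_sq μ hn i j]
    field_simp
  rw [Finset.sum_congr rfl (fun i _ => this i)]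
  rw [Finset.sum_mul_sum]
  rw [Finset.sum_div]
  refine Finset.sum_congr rfl fun i _ => ?_
  rw [Finset.sum_div]

lemma integral_frob_pair (hn : 0 < n) (d e : Fin n → ℝ) (k0 k1 k2 k3 : Fin 8) (h12 : k1 ≠ k2) :
    ∫ q : Fin 8 → Matrix.unitaryGroup (Fin n) ℂ,
        frobSq (rotDiag d (q k0) (q k1) * rotDiag e (q k2) (q k3))
        ∂(Measure.pi fun _ : Fin 8 => μ)
      = (∑ i : Fin n, d i ^ 2) * (∑ j : Fin n, e j ^ 2) / n := by
  have hcong : ∀ q : Fin 8 → Matrix.unitaryGroup (Fin n) ℂ,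
      frobSq (rotDiag d (q k0) (q k1) * rotDiag e (q k2) (q k3)) = hfun d e (q k1 * q k2) :=
    fun q => frobSq_rot_mul d e (q k0) (q k1) (q k2) (q k3)
  rw [integral_congr_ae (Filter.Eventually.of_forall hcong)]
  rw [integral_pair μ (hfun d e) (hfun_measurable d e)
    ((∑ i : Fin n, d i ^ 2) * (∑ j : Fin n, e j ^ 2))
    (fun x => by rw [abs_of_nonneg (hfun_nonneg d e x)]; exact hfun_le d e x) k1 k2 h12]
  exact integral_hfun μ hn d e

lemma measurable_rot (d : Fin n → ℝ) (k0 k1 : Fin 8) :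
    Measurable (fun q : Fin 8 → Matrix.unitaryGroup (Fin n) ℂ => rotDiag d (q k0) (q k1)) := by
  unfold rotDiag
  have h0 : Measurable fun q : Fin 8 → Matrix.unitaryGroup (Fin n) ℂ =>
      ((q k0 : Matrix (Fin n) (Fin n) ℂ)) :=
    measurable_subtype_coe.comp (measurable_pi_apply k0)
  have h1 : Measurable fun q : Fin 8 → Matrix.unitaryGroup (Fin n) ℂ =>
      ((q k1 : Matrix (Fin n) (Fin n) ℂ)) :=
    measurable_subtype_coe.comp (measurable_pi_apply k1)
  exact measurable_matmul (measurable_matmul h0 measurable_const) h1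

lemma measurable_Zfun (d e : Fin n → ℝ) (k0 k1 k2 k3 : Fin 8) :
    Measurable (fun q : Fin 8 → Matrix.unitaryGroup (Fin n) ℂ =>
      frobSq (rotDiag d (q k0) (q k1) * rotDiag e (q k2) (q k3))) :=
  measurable_frobSq_comp (measurable_matmul (measurable_rot d k0 k1) (measurable_rot e k2 k3))

end FOEB

set_option maxHeartbeats 2000000 in
open FOEB in
/-- Let `A = Q₁ D_A Q₂`, `B = Q₃ D_B Q₄`, `ΔA = P₁ D_{ΔA} P₂`, `ΔB = P₃ D_{ΔB} P₄` with eight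
independent Haar unitary matrices (modelled by the 8-fold product of the Haar probability
measure `μ`), where `D_A` has positive diagonal.  With `X = ‖ΔA·ΔB‖_F`, `Z = ‖AB‖_F²`,
`μ_Z = E[Z]` and `G = {Z ≥ (1-ε)μ_Z}`,
`E[X/√Z] ≤ (1/√(1-ε)) ‖D_{ΔA}‖_F ‖D_{ΔB}‖_F/(‖D_A‖_F ‖D_B‖_F) + C √(P(Gᶜ))`, where
`C = √(E[X²])/(σ_min(A) ‖D_B‖_F)` and `σ_min(A) = min_i D_A(i,i)`. -/
theorem first_order_error_bound_haar (n : ℕ) (hn : 0 < n)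
    (dA dB dDA dDB : Fin n → ℝ) (hdA : ∀ i, 0 < dA i)
    (μ : Measure (Matrix.unitaryGroup (Fin n) ℂ))
    [IsProbabilityMeasure μ] [μ.IsHaarMeasure]
    (ε : ℝ) (hε0 : 0 < ε) (hε1 : ε < 1) :
    ∫ q : Fin 8 → Matrix.unitaryGroup (Fin n) ℂ,
        Real.sqrt (frobSq (rotDiag dDA (q 4) (q 5) * rotDiag dDB (q 6) (q 7))) /
          Real.sqrt (frobSq (rotDiag dA (q 0) (q 1) * rotDiag dB (q 2) (q 3)))
        ∂(Measure.pi fun _ : Fin 8 => μ) ≤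
      (1 / Real.sqrt (1 - ε)) *
        (Real.sqrt (∑ i : Fin n, dDA i ^ 2) * Real.sqrt (∑ i : Fin n, dDB i ^ 2)) /
        (Real.sqrt (∑ i : Fin n, dA i ^ 2) * Real.sqrt (∑ i : Fin n, dB i ^ 2)) +
      (Real.sqrt (∫ q : Fin 8 → Matrix.unitaryGroup (Fin n) ℂ,
            frobSq (rotDiag dDA (q 4) (q 5) * rotDiag dDB (q 6) (q 7))
            ∂(Measure.pi fun _ : Fin 8 => μ)) /
          ((⨅ i : Fin n, dA i) * Real.sqrt (∑ i : Fin n, dB i ^ 2))) *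
        Real.sqrt
          (((Measure.pi fun _ : Fin 8 => μ)
              {q : Fin 8 → Matrix.unitaryGroup (Fin n) ℂ |
                (1 - ε) * (∫ q' : Fin 8 → Matrix.unitaryGroup (Fin n) ℂ,
                    frobSq (rotDiag dA (q' 0) (q' 1) * rotDiag dB (q' 2) (q' 3))
                    ∂(Measure.pi fun _ : Fin 8 => μ)) ≤
                  frobSq (rotDiag dA (q 0) (q 1) * rotDiag dB (q 2) (q 3))}ᶜ).toReal) := by
  classical
  haveI : Nonempty (Fin n) := ⟨⟨0, hn⟩⟩
  set ν := Measure.pi fun _ : Fin 8 => μ with hν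
  set Zf : (Fin 8 → Matrix.unitaryGroup (Fin n) ℂ) → ℝ :=
    fun q => frobSq (rotDiag dA (q 0) (q 1) * rotDiag dB (q 2) (q 3)) with hZf
  set X2f : (Fin 8 → Matrix.unitaryGroup (Fin n) ℂ) → ℝ :=
    fun q => frobSq (rotDiag dDA (q 4) (q 5) * rotDiag dDB (q 6) (q 7)) with hX2f
  set Xf : (Fin 8 → Matrix.unitaryGroup (Fin n) ℂ) → ℝ := fun q => Real.sqrt (X2f q) with hXf
  -- measurability
  have hZm : Measurable Zf := measurable_Zfun dA dB 0 1 2 3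
  have hX2m : Measurable X2f := measurable_Zfun dDA dDB 4 5 6 7
  have hXm : Measurable Xf := Real.continuous_sqrt.measurable.comp hX2m
  -- pointwise facts
  have hZ0 : ∀ q, 0 ≤ Zf q := fun q => frobSq_nonneg _
  have hX20 : ∀ q, 0 ≤ X2f q := fun q => frobSq_nonneg _
  have hX0 : ∀ q, 0 ≤ Xf q := fun q => Real.sqrt_nonneg _
  set SA := ∑ i : Fin n, dA i ^ 2 with hSAdef
  set SB := ∑ i : Fin n, dB i ^ 2 with hSBdef
  set SDA := ∑ i : Fin n, dDA i ^ 2 with hSDAdef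
  set SDB := ∑ i : Fin n, dDB i ^ 2 with hSDBdef
  set m := ⨅ i : Fin n, dA i with hmdef
  have hZlow : ∀ q, m ^ 2 * SB ≤ Zf q := by
    intro q
    rw [hZf]
    show m ^ 2 * SB ≤ frobSq (rotDiag dA (q 0) (q 1) * rotDiag dB (q 2) (q 3))
    rw [frobSq_rot_mul]
    exact hfun_lower hn dA dB hdA _
  have hX2le : ∀ q, X2f q ≤ SDA * SDB := by
    intro q
    show frobSq (rotDiag dDA (q 4) (q 5) * rotDiag dDB (q 6) (q 7)) ≤ SDA * SDB
    rw [frobSq_rot_mul]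
    exact hfun_le dDA dDB _
  have hXle : ∀ q, Xf q ≤ Real.sqrt (SDA * SDB) := fun q => Real.sqrt_le_sqrt (hX2le q)
  have hμZ : (∫ q, Zf q ∂ν) = SA * SB / n := integral_frob_pair μ hn dA dB 0 1 2 3 (by decide)
  set μZ := ∫ q, Zf q ∂ν with hμZdef
  set G : Set (Fin 8 → Matrix.unitaryGroup (Fin n) ℂ) := {q | (1 - ε) * μZ ≤ Zf q} with hGdef
  have hGm : MeasurableSet G := measurableSet_le measurable_const hZm
  -- integrability
  have IXf : Integrable Xf ν := integrable_of_bounded ν hXm (Real.sqrt (SDA * SDB))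
    (fun q => by rw [abs_of_nonneg (hX0 q)]; exact hXle q)
  have IX2f : Integrable X2f ν := integrable_of_bounded ν hX2m (SDA * SDB)
    (fun q => by rw [abs_of_nonneg (hX20 q)]; exact hX2le q)
  -- case SB = 0
  by_cases hSB : SB = 0
  · have hZzero : ∀ q, Zf q = 0 := by
      intro q
      have h1 : Zf q ≤ SA * SB := by
        rw [hZf]
        show frobSq (rotDiag dA (q 0) (q 1) * rotDiag dB (q 2) (q 3)) ≤ SA * SB
        rw [frobSq_rot_mul]; exact hfun_le dA dB _
      have := hZ0 q
      rw [hSB, mul_zero] at h1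
      linarith
    have hLHS : (∫ q, Xf q / Real.sqrt (Zf q) ∂ν) = 0 := by
      have : ∀ q : Fin 8 → Matrix.unitaryGroup (Fin n) ℂ,
          Xf q / Real.sqrt (Zf q) = 0 := by
        intro q; rw [hZzero q, Real.sqrt_zero, div_zero]
      rw [integral_congr_ae (Filter.Eventually.of_forall this), integral_zero]
    rw [hLHS]
    have hsB : Real.sqrt SB = 0 := by rw [hSB, Real.sqrt_zero]
    rw [hsB, mul_zero, div_zero, mul_zero, div_zero, zero_mul, add_zero]
  -- main case
  · have hSBpos : 0 < SB :=
      lt_of_le_of_ne (Finset.sum_nonneg fun i _ => sq_nonneg _) (Ne.symm hSB)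
    have hSApos : 0 < SA := Finset.sum_pos (fun i _ => pow_pos (hdA i) 2) Finset.univ_nonempty
    have hmpos : 0 < m := by
      obtain ⟨i0, -, hi0⟩ := Finset.exists_min_image Finset.univ dA ⟨⟨0, hn⟩, Finset.mem_univ _⟩
      have : dA i0 ≤ m := le_ciInf fun i => hi0 i (Finset.mem_univ i)
      linarith [hdA i0]
    have h1ε : (0:ℝ) < 1 - ε := by linarith
    have hnpos : (0:ℝ) < n := by exact_mod_cast hn
    have hμZpos : 0 < μZ := by rw [hμZ]; positivity
    set c1 := Real.sqrt ((1 - ε) * μZ) with hc1def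
    have hc1pos : 0 < c1 := Real.sqrt_pos.mpr (by positivity)
    set mb := m * Real.sqrt SB with hmbdef
    have hmbpos : 0 < mb := mul_pos hmpos (Real.sqrt_pos.mpr hSBpos)
    have hmb_le : ∀ q, mb ≤ Real.sqrt (Zf q) := by
      intro q
      have h1 : Real.sqrt (m ^ 2 * SB) ≤ Real.sqrt (Zf q) := Real.sqrt_le_sqrt (hZlow q)
      rwa [Real.sqrt_mul (sq_nonneg m), Real.sqrt_sq hmpos.le] at h1
    -- pointwise bound
    have hpoint : ∀ q, Xf q / Real.sqrt (Zf q) ≤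
        Xf q / c1 + (Gᶜ).indicator (fun q => Xf q / mb) q := by
      intro q
      by_cases hq : q ∈ G
      · rw [Set.indicator_of_notMem (by simpa using hq), add_zero]
        have hle : c1 ≤ Real.sqrt (Zf q) := by
          rw [hc1def]; exact Real.sqrt_le_sqrt hq
        exact div_le_div_of_nonneg_left (hX0 q) hc1pos hle
      · rw [Set.indicator_of_mem (by simpa using hq)]
        have h2 : Xf q / Real.sqrt (Zf q) ≤ Xf q / mb :=
          div_le_div_of_nonneg_left (hX0 q) hmbpos (hmb_le q)
        have h3 : 0 ≤ Xf q / c1 := div_nonneg (hX0 q) hc1pos.le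
        linarith
    -- integrability of LHS and RHS
    have ILHS : Integrable (fun q => Xf q / Real.sqrt (Zf q)) ν := by
      refine integrable_of_bounded ν (hXm.div (Real.continuous_sqrt.measurable.comp hZm))
        (Real.sqrt (SDA * SDB) / mb) (fun q => ?_)
      rw [abs_of_nonneg (div_nonneg (hX0 q) (Real.sqrt_nonneg _))]
      exact div_le_div₀ (Real.sqrt_nonneg _) (hXle q) hmbpos (hmb_le q)
    have Iind : Integrable ((Gᶜ).indicator (fun q => Xf q / mb)) ν :=
      (IXf.div_const mb).indicator hGm.compl
    have Ic1 : Integrable (fun q => Xf q / c1) ν := IXf.div_const c1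
    have step1 : (∫ q, Xf q / Real.sqrt (Zf q) ∂ν) ≤
        (∫ q, Xf q / c1 ∂ν) + ∫ q, (Gᶜ).indicator (fun q => Xf q / mb) q ∂ν := by
      rw [← integral_add Ic1 Iind]
      exact integral_mono ILHS (Ic1.add Iind) hpoint
    -- Cauchy–Schwarz
    have hconj : (2:ℝ).HolderConjugate 2 := Real.holderConjugate_iff.mpr ⟨one_lt_two, by norm_num⟩
    have hMem2 : MemLp Xf (ENNReal.ofReal 2) ν :=
      MemLp.of_bound hXm.aestronglyMeasurable (Real.sqrt (SDA * SDB))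
        (Filter.Eventually.of_forall fun q => by
          rw [Real.norm_eq_abs, abs_of_nonneg (hX0 q)]; exact hXle q)
    have hrpow2 : ∀ q, Xf q ^ (2:ℝ) = X2f q := by
      intro q
      rw [show (2:ℝ) = ((2:ℕ):ℝ) by norm_num, Real.rpow_natCast]
      exact Real.sq_sqrt (hX20 q)
    have hCS1 : (∫ q, Xf q ∂ν) ≤ Real.sqrt (∫ q, X2f q ∂ν) := by
      have h := integral_mul_le_Lp_mul_Lq_of_nonneg (μ := ν) hconj (f := Xf)
        (g := fun _ => (1:ℝ))
        (Filter.Eventually.of_forall fun q => hX0 q)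
        (Filter.Eventually.of_forall fun _ => zero_le_one)
        hMem2 (memLp_const 1)
      simp only [mul_one] at h
      have h2 : (∫ q, Xf q ^ (2:ℝ) ∂ν) = ∫ q, X2f q ∂ν :=
        integral_congr_ae (Filter.Eventually.of_forall fun q => hrpow2 q)
      have h3 : (∫ _q : Fin 8 → Matrix.unitaryGroup (Fin n) ℂ, (1:ℝ) ^ (2:ℝ) ∂ν) = 1 := by
        simp
      rw [h2, h3] at h
      calc (∫ q, Xf q ∂ν) ≤ (∫ q, X2f q ∂ν) ^ (1/(2:ℝ)) * 1 ^ (1/(2:ℝ)) := h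
        _ = Real.sqrt (∫ q, X2f q ∂ν) := by
            rw [Real.one_rpow, mul_one, Real.sqrt_eq_rpow]
    have hCS2 : (∫ q, (Gᶜ).indicator Xf q ∂ν) ≤
        Real.sqrt (∫ q, X2f q ∂ν) * Real.sqrt ((ν Gᶜ).toReal) := by
      set g : (Fin 8 → Matrix.unitaryGroup (Fin n) ℂ) → ℝ := (Gᶜ).indicator (fun _ => (1:ℝ))
        with hgdef
      have hgm : Measurable g := measurable_const.indicator hGm.compl
      have hg0 : ∀ q, 0 ≤ g q := fun q => Set.indicator_nonneg (fun _ _ => zero_le_one) q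
      have hgle : ∀ q, g q ≤ 1 := fun q => Set.indicator_le_self' (fun _ _ => zero_le_one) q
      have hMemg : MemLp g (ENNReal.ofReal 2) ν :=
        MemLp.of_bound hgm.aestronglyMeasurable 1
          (Filter.Eventually.of_forall fun q => by
            rw [Real.norm_eq_abs, abs_of_nonneg (hg0 q)]; exact hgle q)
      have h := integral_mul_le_Lp_mul_Lq_of_nonneg (μ := ν) hconj (f := Xf) (g := g)
        (Filter.Eventually.of_forall fun q => hX0 q)
        (Filter.Eventually.of_forall fun q => hg0 q)
        hMem2 hMemg
      have hind : ∀ q, (Gᶜ).indicator Xf q = Xf q * g q := by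
        intro q
        by_cases hq : q ∈ Gᶜ
        · rw [Set.indicator_of_mem hq, hgdef, Set.indicator_of_mem hq, mul_one]
        · rw [Set.indicator_of_notMem hq, hgdef, Set.indicator_of_notMem hq, mul_zero]
      rw [integral_congr_ae (Filter.Eventually.of_forall hind)]
      have h2 : (∫ q, Xf q ^ (2:ℝ) ∂ν) = ∫ q, X2f q ∂ν :=
        integral_congr_ae (Filter.Eventually.of_forall fun q => hrpow2 q)
      have h3 : (∫ q, g q ^ (2:ℝ) ∂ν) = (ν Gᶜ).toReal := by
        have : ∀ q, g q ^ (2:ℝ) = g q := by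
          intro q
          by_cases hq : q ∈ Gᶜ
          · rw [hgdef, Set.indicator_of_mem hq, Real.one_rpow]
          · rw [hgdef, Set.indicator_of_notMem hq, Real.zero_rpow (by norm_num)]
        rw [integral_congr_ae (Filter.Eventually.of_forall this), hgdef]
        exact integral_indicator_one hGm.compl
      rw [h2, h3] at h
      calc (∫ q, Xf q * g q ∂ν)
          ≤ (∫ q, X2f q ∂ν) ^ (1/(2:ℝ)) * ((ν Gᶜ).toReal) ^ (1/(2:ℝ)) := h
        _ = Real.sqrt (∫ q, X2f q ∂ν) * Real.sqrt ((ν Gᶜ).toReal) := by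
            rw [Real.sqrt_eq_rpow, Real.sqrt_eq_rpow]
    -- put together
    set EX2 := ∫ q, X2f q ∂ν with hEX2def
    have hEX2v : EX2 = SDA * SDB / n := integral_frob_pair μ hn dDA dDB 4 5 6 7 (by decide)
    have hint_ind : (∫ q, (Gᶜ).indicator (fun q => Xf q / mb) q ∂ν)
        = (∫ q, (Gᶜ).indicator Xf q ∂ν) / mb := by
      rw [← integral_div]
      refine integral_congr_ae (Filter.Eventually.of_forall fun q => ?_)
      show (Gᶜ).indicator (fun q => Xf q / mb) q = ((Gᶜ).indicator Xf q) / mb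
      by_cases hq : q ∈ Gᶜ
      · rw [Set.indicator_of_mem hq, Set.indicator_of_mem hq]
      · rw [Set.indicator_of_notMem hq, Set.indicator_of_notMem hq, zero_div]
    have hterm2 : (∫ q, (Gᶜ).indicator (fun q => Xf q / mb) q ∂ν)
        ≤ (Real.sqrt EX2 / mb) * Real.sqrt ((ν Gᶜ).toReal) := by
      rw [hint_ind, div_mul_eq_mul_div]
      gcongr
    have hSDA0 : (0:ℝ) ≤ SDA := Finset.sum_nonneg fun i _ => sq_nonneg _
    have hSDB0 : (0:ℝ) ≤ SDB := Finset.sum_nonneg fun i _ => sq_nonneg _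
    have hterm1 : (∫ q, Xf q / c1 ∂ν) ≤
        (1 / Real.sqrt (1 - ε)) * (Real.sqrt SDA * Real.sqrt SDB) /
          (Real.sqrt SA * Real.sqrt SB) := by
      rw [integral_div]
      have h1 : (∫ q, Xf q ∂ν) / c1 ≤ Real.sqrt EX2 / c1 := by
        gcongr
      refine h1.trans_eq ?_
      rw [hc1def, hEX2v, hμZ]
      have e1 : Real.sqrt (SDA * SDB / ↑n) = Real.sqrt SDA * Real.sqrt SDB / Real.sqrt ↑n := by
        rw [Real.sqrt_div (mul_nonneg hSDA0 hSDB0), Real.sqrt_mul hSDA0]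
      have e2 : Real.sqrt ((1 - ε) * (SA * SB / ↑n))
          = Real.sqrt (1 - ε) * (Real.sqrt SA * Real.sqrt SB / Real.sqrt ↑n) := by
        rw [Real.sqrt_mul h1ε.le, Real.sqrt_div (mul_nonneg hSApos.le hSBpos.le),
          Real.sqrt_mul hSApos.le]
      rw [e1, e2]
      have hsn : Real.sqrt ↑n ≠ 0 := ne_of_gt (Real.sqrt_pos.mpr hnpos)
      have hs1ε : Real.sqrt (1 - ε) ≠ 0 := ne_of_gt (Real.sqrt_pos.mpr h1ε)
      have hsSA : Real.sqrt SA ≠ 0 := ne_of_gt (Real.sqrt_pos.mpr hSApos)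
      have hsSB : Real.sqrt SB ≠ 0 := ne_of_gt (Real.sqrt_pos.mpr hSBpos)
      field_simp
    have final : (∫ q, Xf q / Real.sqrt (Zf q) ∂ν) ≤
        (1 / Real.sqrt (1 - ε)) * (Real.sqrt SDA * Real.sqrt SDB) /
          (Real.sqrt SA * Real.sqrt SB) +
        (Real.sqrt EX2 / (m * Real.sqrt SB)) * Real.sqrt ((ν Gᶜ).toReal) :=
      step1.trans (add_le_add hterm1 hterm2)
    exact final
end

section
/- Let A, B ∈ ℝ^{n×n} have singular value decompositions A = Σ_{i=1}^n σ_i^A û_i (v̂_i)^T and B = Σ_{j=1}^n σ_j^B ŵ_j (ŷ_j)^T, where {v̂_i} are the orthonormal right singular vectors of A and {ŵ_j} the orthonormal left singular vectors of B. Then ‖AB‖_F² = Σ_{i=1}^n Σ_{j=1}^n (v̂_i^T ŵ_j σ_i^A σ_j^B)². Moreover, for 1 ≤ k ≤ n, letting ΔA = Σ_{i=k+1}^n σ_i^A û_i (v̂_i)^T, ΔB = Σ_{j=k+1}^n σ_j^B ŵ_j (ŷ_j)^T, and M = (A − ΔA)B + ΔA(B − ΔB), one has ‖M‖_F² = Σ_{i=1}^k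 Σ_{j=1}^n (v̂_i^T ŵ_j σ_i^A σ_j^B)² + Σ_{i=k+1}^n Σ_{j=1}^k (v̂_i^T ŵ_j σ_i^A σ_j^B)², and hence ‖M‖_F ≤ ‖AB‖_F. -/
open Matrix Finset

lemma vmv_mul {n : ℕ} (a b c d : Fin n → ℝ) :
    Matrix.vecMulVec a b * Matrix.vecMulVec c d = (b ⬝ᵥ c) • Matrix.vecMulVec a d := by
  ext p q
  simp only [Matrix.mul_apply, Matrix.vecMulVec_apply, Matrix.smul_apply, dotProduct,
    smul_eq_mul, Finset.sum_mul]
  exact Finset.sum_congr rfl fun r _ => by ring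

lemma frob_sum {n : ℕ} (u y : Fin n → (Fin n → ℝ))
    (hu : ∀ i i', u i ⬝ᵥ u i' = if i = i' then 1 else 0)
    (hy : ∀ j j', y j ⬝ᵥ y j' = if j = j' then 1 else 0)
    (S : Finset (Fin n × Fin n)) (c : Fin n × Fin n → ℝ) :
    (∑ p : Fin n, ∑ q : Fin n,
      ((∑ r ∈ S, c r • Matrix.vecMulVec (u r.1) (y r.2)) p q) ^ 2) = ∑ r ∈ S, (c r) ^ 2 := by
  have entry : ∀ p q, (∑ r ∈ S, c r • Matrix.vecMulVec (u r.1) (y r.2)) p q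
      = ∑ r ∈ S, c r * (u r.1 p * y r.2 q) := by
    intro p q
    simp [Matrix.sum_apply, Matrix.vecMulVec_apply]
  have f := fun (r r' : Fin n × Fin n) (p q : Fin n) =>
    (c r * c r') * ((u r.1 p * u r'.1 p) * (y r.2 q * y r'.2 q))
  calc (∑ p : Fin n, ∑ q : Fin n,
      ((∑ r ∈ S, c r • Matrix.vecMulVec (u r.1) (y r.2)) p q) ^ 2)
      = ∑ p : Fin n, ∑ q : Fin n, ∑ r ∈ S, ∑ r' ∈ S,
          (c r * c r') * ((u r.1 p * u r'.1 p) * (y r.2 q * y r'.2 q)) := by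
        refine Finset.sum_congr rfl fun p _ => Finset.sum_congr rfl fun q _ => ?_
        rw [entry, sq, Finset.sum_mul_sum]
        exact Finset.sum_congr rfl fun r _ => Finset.sum_congr rfl fun r' _ => by ring
    _ = ∑ p : Fin n, ∑ r ∈ S, ∑ q : Fin n, ∑ r' ∈ S,
          (c r * c r') * ((u r.1 p * u r'.1 p) * (y r.2 q * y r'.2 q)) :=
        Finset.sum_congr rfl fun p _ => Finset.sum_comm
    _ = ∑ p : Fin n, ∑ r ∈ S, ∑ r' ∈ S, ∑ q : Fin n,
          (c r * c r') * ((u r.1 p * u r'.1 p) * (y r.2 q * y r'.2 q)) :=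
        Finset.sum_congr rfl fun p _ => Finset.sum_congr rfl fun r _ => Finset.sum_comm
    _ = ∑ r ∈ S, ∑ p : Fin n, ∑ r' ∈ S, ∑ q : Fin n,
          (c r * c r') * ((u r.1 p * u r'.1 p) * (y r.2 q * y r'.2 q)) :=
        Finset.sum_comm
    _ = ∑ r ∈ S, ∑ r' ∈ S, ∑ p : Fin n, ∑ q : Fin n,
          (c r * c r') * ((u r.1 p * u r'.1 p) * (y r.2 q * y r'.2 q)) :=
        Finset.sum_congr rfl fun r _ => Finset.sum_comm
    _ = ∑ r ∈ S, ∑ r' ∈ S, (c r * c r') * ((u r.1 ⬝ᵥ u r'.1) * (y r.2 ⬝ᵥ y r'.2)) := by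
        refine Finset.sum_congr rfl fun r _ => Finset.sum_congr rfl fun r' _ => ?_
        rw [dotProduct, dotProduct, Finset.sum_mul_sum, Finset.mul_sum]
        exact Finset.sum_congr rfl fun p _ => by rw [Finset.mul_sum]
    _ = ∑ r ∈ S, (c r) ^ 2 := by
        refine Finset.sum_congr rfl fun r hr => ?_
        have key : ∀ r' ∈ S, (c r * c r') * ((u r.1 ⬝ᵥ u r'.1) * (y r.2 ⬝ᵥ y r'.2))
            = if r' = r then (c r) ^ 2 else 0 := by
          intro r' _
          rw [hu, hy]
          by_cases h : r' = r
          · subst h; simp [sq]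
          · rw [if_neg h]
            by_cases h1 : r.1 = r'.1
            · have h2 : ¬ r.2 = r'.2 := fun h2 => h (Prod.ext h1 h2).symm
              simp [h2]
            · simp [h1]
        rw [Finset.sum_congr rfl key, Finset.sum_ite_eq' S r, if_pos hr]

lemma prod_repr {n : ℕ} (σA σB : Fin n → ℝ) (u v w y : Fin n → (Fin n → ℝ))
    (SA SB : Finset (Fin n)) :
    (∑ i ∈ SA, σA i • Matrix.vecMulVec (u i) (v i)) *
      (∑ j ∈ SB, σB j • Matrix.vecMulVec (w j) (y j)) =
    ∑ r ∈ SA ×ˢ SB, ((v r.1 ⬝ᵥ w r.2) * σA r.1 * σB r.2) • Matrix.vecMulVec (u r.1) (y r.2) := by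
  rw [Finset.sum_mul_sum, Finset.sum_product]
  refine Finset.sum_congr rfl fun i _ => Finset.sum_congr rfl fun j _ => ?_
  rw [Matrix.smul_mul, Matrix.mul_smul, vmv_mul, smul_smul, smul_smul]
  ring_nf

/-- Frobenius norm squared and truncation identity for the product of two matrices given by
their singular value decompositions:
`‖AB‖_F² = Σ_i Σ_j (v̂_i^T ŵ_j σ_i^A σ_j^B)²`, and for the first-order approximation
`M = (A - ΔA)B + ΔA(B - ΔB)` obtained from the truncations after the first `k` components,
`‖M‖_F² = Σ_{i≤k} Σ_j (v̂_i^T ŵ_j σ_i^A σ_j^B)² + Σ_{i>k} Σ_{j≤k} (v̂_i^T ŵ_j σ_i^A σ_j^B)²`,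
whence `‖M‖_F ≤ ‖AB‖_F`. -/
theorem frobenius_norm_first_order_approx_le (n : ℕ)
    (σA σB : Fin n → ℝ) (hσA : ∀ i, 0 ≤ σA i) (hσB : ∀ j, 0 ≤ σB j)
    (u v w y : Fin n → (Fin n → ℝ))
    (hu : ∀ i i', u i ⬝ᵥ u i' = if i = i' then 1 else 0)
    (hv : ∀ i i', v i ⬝ᵥ v i' = if i = i' then 1 else 0)
    (hw : ∀ j j', w j ⬝ᵥ w j' = if j = j' then 1 else 0)
    (hy : ∀ j j', y j ⬝ᵥ y j' = if j = j' then 1 else 0)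
    (A B : Matrix (Fin n) (Fin n) ℝ)
    (hA : A = ∑ i : Fin n, σA i • Matrix.vecMulVec (u i) (v i))
    (hB : B = ∑ j : Fin n, σB j • Matrix.vecMulVec (w j) (y j))
    (k : ℕ) (hk1 : 1 ≤ k) (hkn : k ≤ n)
    (ΔA ΔB M : Matrix (Fin n) (Fin n) ℝ)
    (hΔA : ΔA = ∑ i ∈ Finset.univ.filter (fun i : Fin n => k < (i : ℕ) + 1),
        σA i • Matrix.vecMulVec (u i) (v i))
    (hΔB : ΔB = ∑ j ∈ Finset.univ.filter (fun j : Fin n => k < (j : ℕ) + 1),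
        σB j • Matrix.vecMulVec (w j) (y j))
    (hM : M = (A - ΔA) * B + ΔA * (B - ΔB)) :
    (∑ i : Fin n, ∑ j : Fin n, ((A * B) i j) ^ 2 =
      ∑ i : Fin n, ∑ j : Fin n, ((v i ⬝ᵥ w j) * σA i * σB j) ^ 2) ∧
    (∑ i : Fin n, ∑ j : Fin n, (M i j) ^ 2 =
      (∑ i ∈ Finset.univ.filter (fun i : Fin n => (i : ℕ) + 1 ≤ k),
        ∑ j : Fin n, ((v i ⬝ᵥ w j) * σA i * σB j) ^ 2) +
      ∑ i ∈ Finset.univ.filter (fun i : Fin n => k < (i : ℕ) + 1),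
        ∑ j ∈ Finset.univ.filter (fun j : Fin n => (j : ℕ) + 1 ≤ k),
          ((v i ⬝ᵥ w j) * σA i * σB j) ^ 2) ∧
    Real.sqrt (∑ i : Fin n, ∑ j : Fin n, (M i j) ^ 2) ≤
      Real.sqrt (∑ i : Fin n, ∑ j : Fin n, ((A * B) i j) ^ 2) := by

  classical
  set F1 := Finset.univ.filter (fun i : Fin n => (i : ℕ) + 1 ≤ k) with hF1
  set F2 := Finset.univ.filter (fun i : Fin n => k < (i : ℕ) + 1) with hF2
  have hFnot : F2 = Finset.univ.filter (fun i : Fin n => ¬ ((i : ℕ) + 1 ≤ k)) := by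
    apply Finset.filter_congr; intro i _; simp [not_le]
  set c : Fin n × Fin n → ℝ := fun r => (v r.1 ⬝ᵥ w r.2) * σA r.1 * σB r.2 with hc
  have hsplitA : (∑ i ∈ F1, σA i • Matrix.vecMulVec (u i) (v i)) +
      (∑ i ∈ F2, σA i • Matrix.vecMulVec (u i) (v i)) =
      ∑ i : Fin n, σA i • Matrix.vecMulVec (u i) (v i) := by
    rw [hFnot]
    exact Finset.sum_filter_add_sum_filter_not _ _ _
  have hsplitB : (∑ j ∈ F1, σB j • Matrix.vecMulVec (w j) (y j)) +
      (∑ j ∈ F2, σB j • Matrix.vecMulVec (w j) (y j)) =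
      ∑ j : Fin n, σB j • Matrix.vecMulVec (w j) (y j) := by
    rw [hFnot]
    exact Finset.sum_filter_add_sum_filter_not _ _ _
  have hAd : A - ΔA = ∑ i ∈ F1, σA i • Matrix.vecMulVec (u i) (v i) := by
    rw [hA, hΔA, ← hsplitA]; abel
  have hBd : B - ΔB = ∑ j ∈ F1, σB j • Matrix.vecMulVec (w j) (y j) := by
    rw [hB, hΔB, ← hsplitB]; abel
  have hAB : A * B = ∑ r ∈ (Finset.univ ×ˢ Finset.univ),
      c r • Matrix.vecMulVec (u r.1) (y r.2) := by
    rw [hA, hB]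
    exact prod_repr σA σB u v w y _ _
  have part1 : ∑ i : Fin n, ∑ j : Fin n, ((A * B) i j) ^ 2 =
      ∑ i : Fin n, ∑ j : Fin n, ((v i ⬝ᵥ w j) * σA i * σB j) ^ 2 := by
    rw [hAB, frob_sum u y hu hy _ c, Finset.sum_product]
  have hdisj : Disjoint (F1 ×ˢ (Finset.univ : Finset (Fin n))) (F2 ×ˢ F1) := by
    rw [Finset.disjoint_left]
    rintro ⟨i, j⟩ h1 h2
    rw [Finset.mem_product] at h1 h2
    have q1 := Finset.mem_filter.1 h1.1
    have q2 := Finset.mem_filter.1 h2.1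
    omega
  have hM' : M = ∑ r ∈ (F1 ×ˢ (Finset.univ : Finset (Fin n))) ∪ (F2 ×ˢ F1),
      c r • Matrix.vecMulVec (u r.1) (y r.2) := by
    rw [hM, hAd, hBd, hΔA, hB, Finset.sum_union hdisj]
    rw [prod_repr σA σB u v w y F1 Finset.univ, prod_repr σA σB u v w y F2 F1]
  have part2 : ∑ i : Fin n, ∑ j : Fin n, (M i j) ^ 2 =
      (∑ i ∈ F1, ∑ j : Fin n, ((v i ⬝ᵥ w j) * σA i * σB j) ^ 2) +
      ∑ i ∈ F2, ∑ j ∈ F1, ((v i ⬝ᵥ w j) * σA i * σB j) ^ 2 := by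
    rw [hM', frob_sum u y hu hy _ c, Finset.sum_union hdisj, Finset.sum_product,
      Finset.sum_product]
  refine ⟨part1, part2, ?_⟩
  apply Real.sqrt_le_sqrt
  rw [part1, part2]
  have hABsplit : ∑ i : Fin n, ∑ j : Fin n, ((v i ⬝ᵥ w j) * σA i * σB j) ^ 2 =
      (∑ i ∈ F1, ∑ j : Fin n, ((v i ⬝ᵥ w j) * σA i * σB j) ^ 2) +
      ∑ i ∈ F2, ∑ j : Fin n, ((v i ⬝ᵥ w j) * σA i * σB j) ^ 2 := by
    rw [hFnot]
    exact (Finset.sum_filter_add_sum_filter_not _ _ _).symm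
  rw [hABsplit]
  refine add_le_add (le_refl _) (Finset.sum_le_sum fun i _ => ?_)
  exact Finset.sum_le_sum_of_subset_of_nonneg (Finset.filter_subset _ _)
    (fun j _ _ => sq_nonneg _)
end

section
/- Let D₁ and D₂ be fixed real n×n diagonal matrices and let ΔA = Q₁ D₁ Q₂ and ΔB = Q₃ D₂ Q₄ with Q₁, Q₂, Q₃, Q₄ independent Haar-distributed n×n unitary matrices. Then E[‖ΔA·ΔB‖_F] ≤ (1/√n) ‖D₁‖_F ‖D₂‖_F. -/
open Matrix Finset MeasureTheory

namespace FrobHaar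

variable {n : ℕ}

abbrev UG (n : ℕ) := Matrix.unitaryGroup (Fin n) ℂ

lemma measurable_entry (i j : Fin n) :
    Measurable (fun u : UG n => (u : Matrix (Fin n) (Fin n) ℂ) i j) :=
  ((measurable_pi_apply j).comp ((measurable_pi_apply i).comp measurable_subtype_coe))

instance : MeasurableMul₂ (UG n) := by
  constructor
  have : Measurable (fun p : UG n × UG n => ((p.1 * p.2 : UG n) : Matrix (Fin n) (Fin n) ℂ)) := by
    apply measurable_pi_iff.2; intro i
    apply measurable_pi_iff.2; intro j
    have : (fun p : UG n × UG n => ((p.1 * p.2 : UG n) : Matrix (Fin n) (Fin n) ℂ) i j)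
        = fun p : UG n × UG n => ∑ k : Fin n,
            (p.1 : Matrix (Fin n) (Fin n) ℂ) i k * (p.2 : Matrix (Fin n) (Fin n) ℂ) k j := by
      funext p; simp [Matrix.mul_apply]
    rw [this]
    exact Finset.measurable_sum _ fun k _ =>
      ((measurable_entry i k).comp measurable_fst).mul ((measurable_entry k j).comp measurable_snd)
  exact Measurable.subtype_mk this

end FrobHaar
namespace FrobHaar

variable {n : ℕ}

lemma sumSq_eq_trace (A : Matrix (Fin n) (Fin n) ℂ) :
    ∑ i : Fin n, ∑ j : Fin n, ‖A i j‖ ^ 2 = (Matrix.trace (Aᴴ * A)).re := by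
  rw [Matrix.trace, Finset.sum_comm, Complex.re_sum]
  refine Finset.sum_congr rfl fun j _ => ?_
  rw [Matrix.diag_apply, Matrix.mul_apply, Complex.re_sum]
  refine Finset.sum_congr rfl fun i _ => ?_
  rw [Matrix.conjTranspose_apply]
  simp [Complex.star_def, ← Complex.normSq_eq_conj_mul_self, Complex.normSq_eq_norm_sq, ← Complex.ofReal_pow]

lemma sumSq_unitary_left (U : Matrix.unitaryGroup (Fin n) ℂ) (A : Matrix (Fin n) (Fin n) ℂ) :
    ∑ i : Fin n, ∑ j : Fin n, ‖((U : Matrix (Fin n) (Fin n) ℂ) * A) i j‖ ^ 2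
      = ∑ i : Fin n, ∑ j : Fin n, ‖A i j‖ ^ 2 := by
  have h : (U : Matrix (Fin n) (Fin n) ℂ)ᴴ * (U : Matrix (Fin n) (Fin n) ℂ) = 1 := by
    rw [← Matrix.star_eq_conjTranspose]; exact U.2.1
  rw [sumSq_eq_trace, sumSq_eq_trace]
  congr 2
  rw [Matrix.conjTranspose_mul, Matrix.mul_assoc,
    ← Matrix.mul_assoc (U : Matrix (Fin n) (Fin n) ℂ)ᴴ, h, Matrix.one_mul]

lemma sumSq_unitary_right (U : Matrix.unitaryGroup (Fin n) ℂ) (A : Matrix (Fin n) (Fin n) ℂ) :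
    ∑ i : Fin n, ∑ j : Fin n, ‖(A * (U : Matrix (Fin n) (Fin n) ℂ)) i j‖ ^ 2
      = ∑ i : Fin n, ∑ j : Fin n, ‖A i j‖ ^ 2 := by
  have h : (U : Matrix (Fin n) (Fin n) ℂ) * (U : Matrix (Fin n) (Fin n) ℂ)ᴴ = 1 := by
    rw [← Matrix.star_eq_conjTranspose]; exact U.2.2
  rw [sumSq_eq_trace, sumSq_eq_trace]
  congr 1
  calc Matrix.trace ((A * ↑U)ᴴ * (A * ↑U))
      = Matrix.trace ((↑U : Matrix (Fin n) (Fin n) ℂ)ᴴ * (Aᴴ * (A * ↑U))) := by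
        rw [Matrix.conjTranspose_mul, Matrix.mul_assoc]
    _ = Matrix.trace ((Aᴴ * (A * ↑U)) * (↑U : Matrix (Fin n) (Fin n) ℂ)ᴴ) :=
        Matrix.trace_mul_comm _ _
    _ = Matrix.trace (Aᴴ * A) := by
        rw [Matrix.mul_assoc, Matrix.mul_assoc, h, Matrix.mul_one]


/-- The permutation matrix of `σ` as an element of the unitary group. -/
noncomputable def permUnitary (σ : Equiv.Perm (Fin n)) : Matrix.unitaryGroup (Fin n) ℂ :=
  ⟨(1 : Matrix (Fin n) (Fin n) ℂ).submatrix σ (Equiv.refl (Fin n)), by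
    rw [Matrix.mem_unitaryGroup_iff]
    rw [Matrix.star_eq_conjTranspose, Matrix.conjTranspose_submatrix, Matrix.conjTranspose_one]
    rw [Matrix.submatrix_mul_equiv, Matrix.one_mul, Matrix.submatrix_one_equiv]⟩

lemma permUnitary_mul (σ : Equiv.Perm (Fin n)) (u : Matrix.unitaryGroup (Fin n) ℂ)
    (i j : Fin n) :
    ((permUnitary σ * u : Matrix.unitaryGroup (Fin n) ℂ) : Matrix (Fin n) (Fin n) ℂ) i j
      = (u : Matrix (Fin n) (Fin n) ℂ) (σ i) j := by
  show ((permUnitary σ).1 * u.1) i j = _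
  have : (permUnitary σ).1 * u.1 = u.1.submatrix σ (Equiv.refl (Fin n)) := by
    have := Matrix.submatrix_mul_equiv (1 : Matrix (Fin n) (Fin n) ℂ) u.1 σ
      (Equiv.refl (Fin n)) (Equiv.refl (Fin n))
    simpa [permUnitary] using this
  rw [this]
  rfl

lemma col_sumSq (u : Matrix.unitaryGroup (Fin n) ℂ) (j : Fin n) :
    ∑ i : Fin n, ‖(u : Matrix (Fin n) (Fin n) ℂ) i j‖ ^ 2 = 1 := by
  have h : (star u.1 * u.1) j j = (1 : Matrix (Fin n) (Fin n) ℂ) j j := by rw [u.2.1]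
  rw [Matrix.star_eq_conjTranspose, Matrix.mul_apply] at h
  rw [Matrix.one_apply_eq] at h
  have h2 : ∑ i : Fin n, (Complex.normSq (u.1 i j) : ℂ) = 1 := by
    rw [← h]
    refine Finset.sum_congr rfl fun i _ => ?_
    rw [Matrix.conjTranspose_apply, Complex.star_def, Complex.normSq_eq_conj_mul_self]
  have h3 : ∑ i : Fin n, Complex.normSq (u.1 i j) = 1 := by
    have := congrArg Complex.re h2
    simpa [Complex.re_sum] using this
  rw [← h3]
  refine Finset.sum_congr rfl fun i _ => ?_
  rw [Complex.normSq_eq_norm_sq]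

lemma entry_sq_le_one (u : Matrix.unitaryGroup (Fin n) ℂ) (i j : Fin n) :
    ‖(u : Matrix (Fin n) (Fin n) ℂ) i j‖ ^ 2 ≤ 1 := by
  rw [← col_sumSq u j]
  exact Finset.single_le_sum (f := fun i => ‖(u : Matrix (Fin n) (Fin n) ℂ) i j‖ ^ 2) (fun k _ => by positivity) (Finset.mem_univ i)


lemma integrable_of_bound {α : Type*} [MeasurableSpace α] (μ : Measure α) [IsFiniteMeasure μ]
    {f : α → ℝ} (hf : Measurable f) (C : ℝ) (h : ∀ x, |f x| ≤ C) : Integrable f μ :=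
  memLp_one_iff_integrable.1 (MemLp.of_bound hf.aestronglyMeasurable C
    (Filter.Eventually.of_forall (fun x => by simpa using h x)))

lemma measurable_entrySq (i j : Fin n) :
    Measurable (fun u : UG n => ‖(u : Matrix (Fin n) (Fin n) ℂ) i j‖ ^ 2) :=
  (measurable_entry i j).norm.pow_const 2

lemma integrable_entrySq (μ : Measure (UG n)) [IsFiniteMeasure μ] (i j : Fin n) :
    Integrable (fun u : UG n => ‖(u : Matrix (Fin n) (Fin n) ℂ) i j‖ ^ 2) μ :=
  integrable_of_bound μ (measurable_entrySq i j) 1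
    (fun u => by rw [abs_of_nonneg (by positivity)]; exact entry_sq_le_one u i j)

lemma haar_entrySq (μ : Measure (UG n)) [IsProbabilityMeasure μ] [μ.IsHaarMeasure]
    (i j : Fin n) :
    ∫ u : UG n, ‖(u : Matrix (Fin n) (Fin n) ℂ) i j‖ ^ 2 ∂μ = 1 / n := by
  have hrow : ∀ i' : Fin n,
      ∫ u : UG n, ‖(u : Matrix (Fin n) (Fin n) ℂ) i' j‖ ^ 2 ∂μ
        = ∫ u : UG n, ‖(u : Matrix (Fin n) (Fin n) ℂ) i j‖ ^ 2 ∂μ := by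
    intro i'
    have key := integral_mul_left_eq_self (μ := μ)
      (fun u : UG n => ‖(u : Matrix (Fin n) (Fin n) ℂ) i j‖ ^ 2) (permUnitary (Equiv.swap i i'))
    have : ∀ u : UG n,
        ‖((permUnitary (Equiv.swap i i') * u : UG n) : Matrix (Fin n) (Fin n) ℂ) i j‖ ^ 2
          = ‖(u : Matrix (Fin n) (Fin n) ℂ) i' j‖ ^ 2 := by
      intro u
      rw [permUnitary_mul, Equiv.swap_apply_left]
    rw [← key]
    simp only [this]
  have hsum : ∑ i' : Fin n,
      ∫ u : UG n, ‖(u : Matrix (Fin n) (Fin n) ℂ) i' j‖ ^ 2 ∂μ = 1 := by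
    rw [← integral_finset_sum _ (fun i' _ => integrable_entrySq μ i' j)]
    simp only [col_sumSq]
    simp
  rw [Finset.sum_congr rfl (fun i' _ => hrow i')] at hsum
  rw [Finset.sum_const, Finset.card_univ, Fintype.card_fin, nsmul_eq_mul] at hsum
  have hn : (0:ℝ) < n := by exact_mod_cast i.pos
  field_simp at hsum ⊢
  linarith


/-- Jensen/Cauchy–Schwarz: for a probability measure, `∫ √g ≤ √(∫ g)`. -/
lemma integral_sqrt_le {Ω : Type*} [MeasurableSpace Ω] (P : Measure Ω)
    [IsProbabilityMeasure P] {g : Ω → ℝ} (hg : Measurable g) (hg0 : ∀ x, 0 ≤ g x)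
    (C : ℝ) (hb : ∀ x, g x ≤ C) :
    ∫ x, Real.sqrt (g x) ∂P ≤ Real.sqrt (∫ x, g x ∂P) := by
  set f : Ω → ℝ := fun x => Real.sqrt (g x) with hf
  have hfm : Measurable f := hg.sqrt
  have hfL2 : MemLp f 2 P := by
    refine MemLp.of_bound hfm.aestronglyMeasurable (Real.sqrt C) ?_
    exact Filter.Eventually.of_forall fun x => by
      simp only [Real.norm_eq_abs, abs_of_nonneg (Real.sqrt_nonneg _), f]
      exact Real.sqrt_le_sqrt (hb x)
  have hvar := ProbabilityTheory.variance_nonneg f P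
  rw [ProbabilityTheory.variance_eq_sub hfL2] at hvar
  have hsq : ∫ x, (f ^ 2) x ∂P = ∫ x, g x ∂P := by
    refine integral_congr_ae (Filter.Eventually.of_forall fun x => ?_)
    simp [f, Real.sq_sqrt (hg0 x)]
  rw [hsq] at hvar
  have h1 : (∫ x, f x ∂P) ^ 2 ≤ ∫ x, g x ∂P := by linarith
  have h2 : 0 ≤ ∫ x, f x ∂P := integral_nonneg fun x => Real.sqrt_nonneg _
  calc ∫ x, f x ∂P = Real.sqrt ((∫ x, f x ∂P) ^ 2) := (Real.sqrt_sq h2).symm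
    _ ≤ Real.sqrt (∫ x, g x ∂P) := Real.sqrt_le_sqrt h1


lemma integral_quad (μ : Measure (UG n)) [IsProbabilityMeasure μ] [μ.IsHaarMeasure]
    (F : UG n → ℝ) (hF : Measurable F) (C : ℝ) (hb : ∀ u, |F u| ≤ C) :
    ∫ q : UG n × UG n × UG n × UG n, F (q.2.1 * q.2.2.1) ∂(μ.prod (μ.prod (μ.prod μ)))
      = ∫ u, F u ∂μ := by
  have hm2 : ∀ a : UG n, Measurable (fun z : UG n × UG n => F (a * z.1)) := fun a =>
    hF.comp ((measurable_const (a := a)).mul measurable_fst)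
  have hm3 : Measurable (fun y : UG n × UG n × UG n => F (y.1 * y.2.1)) :=
    hF.comp (measurable_fst.mul (measurable_fst.comp measurable_snd))
  have hm4 : Measurable (fun q : UG n × UG n × UG n × UG n => F (q.2.1 * q.2.2.1)) :=
    hF.comp ((measurable_fst.comp measurable_snd).mul
      (measurable_fst.comp (measurable_snd.comp measurable_snd)))
  have hint4 : Integrable (fun q : UG n × UG n × UG n × UG n => F (q.2.1 * q.2.2.1))
      (μ.prod (μ.prod (μ.prod μ))) :=
    integrable_of_bound _ hm4 C (fun q => hb _)
  have hint3 : Integrable (fun y : UG n × UG n × UG n => F (y.1 * y.2.1))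
      (μ.prod (μ.prod μ)) := integrable_of_bound _ hm3 C (fun y => hb _)
  have hint2 : ∀ a : UG n, Integrable (fun z : UG n × UG n => F (a * z.1)) (μ.prod μ) :=
    fun a => integrable_of_bound _ (hm2 a) C (fun z => hb _)
  have h2 : ∀ a : UG n, ∫ z : UG n × UG n, F (a * z.1) ∂(μ.prod μ) = ∫ u, F u ∂μ := by
    intro a
    rw [integral_prod _ (hint2 a)]
    simp only [integral_const, measure_univ, probReal_univ, ENNReal.toReal_one, smul_eq_mul, one_mul]
    exact integral_mul_left_eq_self F a
  have h3 : ∫ y : UG n × UG n × UG n, F (y.1 * y.2.1) ∂(μ.prod (μ.prod μ)) = ∫ u, F u ∂μ := by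
    rw [integral_prod _ hint3]
    simp only [h2, integral_const, measure_univ, probReal_univ, ENNReal.toReal_one, smul_eq_mul, one_mul]
  rw [integral_prod _ hint4]
  simp only [h3, integral_const, measure_univ, probReal_univ, ENNReal.toReal_one, smul_eq_mul, one_mul]

lemma integral_G (μ : Measure (UG n)) [IsProbabilityMeasure μ] [μ.IsHaarMeasure]
    (d₁ d₂ : Fin n → ℝ) :
    ∫ u : UG n, (∑ i : Fin n, ∑ j : Fin n,
        (d₁ i) ^ 2 * (d₂ j) ^ 2 * ‖(u : Matrix (Fin n) (Fin n) ℂ) i j‖ ^ 2) ∂μ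
      = (1 / n) * (∑ i : Fin n, (d₁ i) ^ 2) * (∑ j : Fin n, (d₂ j) ^ 2) := by
  rw [integral_finset_sum _ (fun i _ => integrable_finset_sum _
    (fun j _ => (integrable_entrySq μ i j).const_mul _))]
  have key : ∀ i : Fin n, ∫ u : UG n, (∑ j : Fin n,
      (d₁ i) ^ 2 * (d₂ j) ^ 2 * ‖(u : Matrix (Fin n) (Fin n) ℂ) i j‖ ^ 2) ∂μ
      = ∑ j : Fin n, (d₁ i) ^ 2 * (d₂ j) ^ 2 * (1 / n) := by
    intro i
    rw [integral_finset_sum _ (fun j _ => (integrable_entrySq μ i j).const_mul _)]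
    exact Finset.sum_congr rfl fun j _ => by rw [MeasureTheory.integral_const_mul, haar_entrySq]
  rw [Finset.sum_congr rfl (fun i _ => key i)]
  rw [mul_assoc, Finset.sum_mul_sum, Finset.mul_sum]
  refine Finset.sum_congr rfl fun i _ => ?_
  rw [Finset.mul_sum]
  exact Finset.sum_congr rfl fun j _ => by ring

lemma pointwise (d₁ d₂ : Fin n → ℝ) (q : UG n × UG n × UG n × UG n) :
    ∑ i : Fin n, ∑ j : Fin n,
      ‖(((q.1 : Matrix (Fin n) (Fin n) ℂ) * Matrix.diagonal (fun i => (d₁ i : ℂ)) *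
          (q.2.1 : Matrix (Fin n) (Fin n) ℂ)) *
        ((q.2.2.1 : Matrix (Fin n) (Fin n) ℂ) * Matrix.diagonal (fun i => (d₂ i : ℂ)) *
          (q.2.2.2 : Matrix (Fin n) (Fin n) ℂ))) i j‖ ^ 2
    = ∑ i : Fin n, ∑ j : Fin n, (d₁ i) ^ 2 * (d₂ j) ^ 2 *
        ‖((q.2.1 * q.2.2.1 : UG n) : Matrix (Fin n) (Fin n) ℂ) i j‖ ^ 2 := by
  obtain ⟨a, b, c, e⟩ := q
  simp only
  have h1 : (a.1 * Matrix.diagonal (fun i => (d₁ i : ℂ)) * b.1) *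
      (c.1 * Matrix.diagonal (fun i => (d₂ i : ℂ)) * e.1)
      = a.1 * ((Matrix.diagonal (fun i => (d₁ i : ℂ)) * ((b * c : UG n) : Matrix (Fin n) (Fin n) ℂ)
          * Matrix.diagonal (fun i => (d₂ i : ℂ))) * e.1) := by
    simp only [Matrix.UnitaryGroup.mul_val, Matrix.mul_assoc]
  rw [h1, sumSq_unitary_left a, sumSq_unitary_right e]
  refine Finset.sum_congr rfl fun i _ => Finset.sum_congr rfl fun j _ => ?_
  rw [Matrix.mul_diagonal, Matrix.diagonal_mul]
  simp only [norm_mul, Complex.norm_real, Real.norm_eq_abs, mul_pow, sq_abs]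
  ring

end FrobHaar

open FrobHaar in
/-- Let `D₁`, `D₂` be fixed real diagonal matrices and `Q₁, Q₂, Q₃, Q₄` independent
Haar-distributed unitary matrices (modelled by the 4-fold product of the normalized Haar
probability measure `μ` on the unitary group). With `ΔA = Q₁ D₁ Q₂` and `ΔB = Q₃ D₂ Q₄`,
`E[‖ΔA·ΔB‖_F] ≤ (1/√n) ‖D₁‖_F ‖D₂‖_F`. -/
theorem expected_frobenius_norm_product_haar_le (n : ℕ) (d₁ d₂ : Fin n → ℝ)
    (μ : Measure (Matrix.unitaryGroup (Fin n) ℂ))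
    [IsProbabilityMeasure μ] [μ.IsHaarMeasure] :
    ∫ q : Matrix.unitaryGroup (Fin n) ℂ × Matrix.unitaryGroup (Fin n) ℂ ×
        Matrix.unitaryGroup (Fin n) ℂ × Matrix.unitaryGroup (Fin n) ℂ,
      Real.sqrt (∑ i : Fin n, ∑ j : Fin n,
        ‖(((q.1 : Matrix (Fin n) (Fin n) ℂ) * Matrix.diagonal (fun i => (d₁ i : ℂ)) *
            (q.2.1 : Matrix (Fin n) (Fin n) ℂ)) *
          ((q.2.2.1 : Matrix (Fin n) (Fin n) ℂ) * Matrix.diagonal (fun i => (d₂ i : ℂ)) *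
            (q.2.2.2 : Matrix (Fin n) (Fin n) ℂ))) i j‖ ^ 2)
      ∂(μ.prod (μ.prod (μ.prod μ))) ≤
    (1 / Real.sqrt n) * Real.sqrt (∑ i : Fin n, (d₁ i) ^ 2) *
      Real.sqrt (∑ i : Fin n, (d₂ i) ^ 2) := by
  set G : UG n → ℝ := fun u => ∑ i : Fin n, ∑ j : Fin n,
    (d₁ i) ^ 2 * (d₂ j) ^ 2 * ‖(u : Matrix (Fin n) (Fin n) ℂ) i j‖ ^ 2 with hGdef
  set B : ℝ := ∑ i : Fin n, ∑ j : Fin n, (d₁ i) ^ 2 * (d₂ j) ^ 2 with hBdef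
  have hGmeas : Measurable G := by
    apply Finset.measurable_sum; intro i _
    apply Finset.measurable_sum; intro j _
    exact (measurable_entrySq i j).const_mul _
  have hGnonneg : ∀ u, 0 ≤ G u := fun u =>
    Finset.sum_nonneg fun i _ => Finset.sum_nonneg fun j _ => by positivity
  have hGle : ∀ u, G u ≤ B := by
    intro u
    refine Finset.sum_le_sum fun i _ => Finset.sum_le_sum fun j _ => ?_
    exact mul_le_of_le_one_right (by positivity) (entry_sq_le_one u i j)
  have hGabs : ∀ u, |G u| ≤ B := fun u => by
    rw [abs_of_nonneg (hGnonneg u)]; exact hGle u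
  set P := μ.prod (μ.prod (μ.prod μ)) with hP
  set g : UG n × UG n × UG n × UG n → ℝ := fun q => G (q.2.1 * q.2.2.1) with hgdef
  have hgmeas : Measurable g :=
    hGmeas.comp ((measurable_fst.comp measurable_snd).mul
      (measurable_fst.comp (measurable_snd.comp measurable_snd)))
  have step1 : (∫ q : Matrix.unitaryGroup (Fin n) ℂ × Matrix.unitaryGroup (Fin n) ℂ ×
        Matrix.unitaryGroup (Fin n) ℂ × Matrix.unitaryGroup (Fin n) ℂ,
      Real.sqrt (∑ i : Fin n, ∑ j : Fin n,
        ‖(((q.1 : Matrix (Fin n) (Fin n) ℂ) * Matrix.diagonal (fun i => (d₁ i : ℂ)) *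
            (q.2.1 : Matrix (Fin n) (Fin n) ℂ)) *
          ((q.2.2.1 : Matrix (Fin n) (Fin n) ℂ) * Matrix.diagonal (fun i => (d₂ i : ℂ)) *
            (q.2.2.2 : Matrix (Fin n) (Fin n) ℂ))) i j‖ ^ 2) ∂P)
      = ∫ q, Real.sqrt (g q) ∂P := by
    refine integral_congr_ae (Filter.Eventually.of_forall fun q => ?_)
    beta_reduce
    rw [pointwise d₁ d₂ q]
  rw [step1]
  have step2 : ∫ q, Real.sqrt (g q) ∂P ≤ Real.sqrt (∫ q, g q ∂P) :=
    integral_sqrt_le P hgmeas (fun q => hGnonneg _) B (fun q => hGle _)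
  have step3 : ∫ q, g q ∂P = ∫ u, G u ∂μ := integral_quad μ G hGmeas B hGabs
  have step4 : ∫ u, G u ∂μ
      = (1 / n) * (∑ i : Fin n, (d₁ i) ^ 2) * (∑ j : Fin n, (d₂ j) ^ 2) :=
    integral_G μ d₁ d₂
  have hX : (0:ℝ) ≤ ∑ i : Fin n, (d₁ i) ^ 2 := Finset.sum_nonneg fun i _ => sq_nonneg _
  have hY : (0:ℝ) ≤ ∑ i : Fin n, (d₂ i) ^ 2 := Finset.sum_nonneg fun i _ => sq_nonneg _
  have step5 : Real.sqrt ((1 / n) * (∑ i : Fin n, (d₁ i) ^ 2) * (∑ j : Fin n, (d₂ j) ^ 2))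
      = (1 / Real.sqrt n) * Real.sqrt (∑ i : Fin n, (d₁ i) ^ 2) *
        Real.sqrt (∑ i : Fin n, (d₂ i) ^ 2) := by
    rw [Real.sqrt_mul (by positivity), Real.sqrt_mul (by positivity), one_div, one_div,
      Real.sqrt_inv]
  calc ∫ q, Real.sqrt (g q) ∂P ≤ Real.sqrt (∫ q, g q ∂P) := step2
    _ = (1 / Real.sqrt n) * Real.sqrt (∑ i : Fin n, (d₁ i) ^ 2) *
        Real.sqrt (∑ i : Fin n, (d₂ i) ^ 2) := by rw [step3, step4, step5]
end
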